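/- arXiv:1203.6468 — 10 statements merged into one kernel-verified Lean document; each statement's English description precedes it below -/
import Mathlib

section
/- Let M = (M_k), indexed by nonempty proper subsets k of Ĩ = [n+1, n+m+1], be a BZ datum: it satisfies (BZ-1) for all distinct i, j ∈ Ĩ and k with k ∩ {i,j} = ∅, M_{k∪{i}} + M_{k∪{j}} ≤ M_{k∪{i,j}} + M_k, and (BZ-2) for all i < j < l in Ĩ and k with k ∩ {i,j,l} = ∅, M_{k∪{i,l}} + M_{k∪{j}} = min(M_{k∪{i,j}} + M_{k∪{l}}, M_{k∪{j,l}} + M_{k∪{i}}), with the convention M_∅ = M_Ĩ = 0. Define M* by (M*)_k := M_{Ĩ∖k}. Then M* again satisfies (BZ-1) and (BZ-2). -/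
/-- The extended interval Ĩ = [n+1, n+m+1]. -/
noncomputable def Itilde (n m : ℤ) : Finset ℤ := Finset.Icc (n + 1) (n + m + 1)

/-- The pairing ⟨h_i, k⟩ ∈ {−1,0,1} determined by membership of i, i+1 in k. -/
def pairH (i : ℤ) (k : Finset ℤ) : ℤ :=
  if i ∈ k ∧ i + 1 ∉ k then 1 else if i ∉ k ∧ i + 1 ∈ k then -1 else 0

/-- Edge inequalities (BZ-1). -/
def BZ1 (n m : ℤ) (M : Finset ℤ → ℤ) : Prop :=
  ∀ (i j : ℤ) (k : Finset ℤ), i ∈ Itilde n m → j ∈ Itilde n m → i ≠ j →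
    k ⊆ Itilde n m → i ∉ k → j ∉ k →
    M (insert i k) + M (insert j k) ≤ M (insert i (insert j k)) + M k

/-- Tropical Plücker relations (BZ-2). -/
def BZ2 (n m : ℤ) (M : Finset ℤ → ℤ) : Prop :=
  ∀ (i j l : ℤ) (k : Finset ℤ), i ∈ Itilde n m → j ∈ Itilde n m → l ∈ Itilde n m →
    i < j → j < l → k ⊆ Itilde n m → i ∉ k → j ∉ k → l ∉ k →
    M (insert i (insert l k)) + M (insert j k) =
      min (M (insert i (insert j k)) + M (insert l k))
        (M (insert j (insert l k)) + M (insert i k))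

/-- The e-normalization condition (BZ-0). -/
def eNorm (n m : ℤ) (M : Finset ℤ → ℤ) : Prop :=
  ∀ i ∈ Finset.Icc (n + 1) (n + m), M (Finset.Icc (n + 1) i) = 0

/-- e-BZ datum on the interval I = [n+1, n+m], with the conventions M_∅ = M_Ĩ = 0. -/
def eBZ (n m : ℤ) (M : Finset ℤ → ℤ) : Prop :=
  M ∅ = 0 ∧ M (Itilde n m) = 0 ∧ BZ1 n m M ∧ BZ2 n m M ∧ eNorm n m M

/-- wt^∨(M) paired with a Maya diagram k. -/
noncomputable def wtv (n m : ℤ) (M : Finset ℤ → ℤ) (k : Finset ℤ) : ℤ :=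
  ∑ i ∈ Finset.Icc (n + 1) (n + m), M (Finset.Icc (i + 1) (n + m + 1)) * pairH i k

/-- The sharp operation M ↦ M^♯. -/
noncomputable def sharp (n m : ℤ) (M : Finset ℤ → ℤ) : Finset ℤ → ℤ :=
  fun k => M (Itilde n m \ k) - wtv n m M k

lemma compl_eq_insert (S k : Finset ℤ) (i : ℤ) (hi : i ∈ S) (hik : i ∉ k) :
    S \ k = insert i (S \ insert i k) := by
  ext x
  simp only [Finset.mem_sdiff, Finset.mem_insert]
  constructor
  · rintro ⟨hxS, hxk⟩
    by_cases h : x = i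
    · exact Or.inl h
    · exact Or.inr ⟨hxS, fun c => c.elim h hxk⟩
  · rintro (rfl | ⟨hxS, h⟩)
    · exact ⟨hi, hik⟩
    · exact ⟨hxS, fun c => h (Or.inr c)⟩

lemma compl2_eq_insert (S k : Finset ℤ) (a b : ℤ) (ha : a ∈ S) (hb : b ∈ S)
    (hab : a ≠ b) (hak : a ∉ k) (hbk : b ∉ k) :
    S \ k = insert a (insert b (S \ insert a (insert b k))) := by
  rw [compl_eq_insert S k a ha hak]
  congr 1
  rw [compl_eq_insert S (insert a k) b hb (by simp [hab.symm, hbk]),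
    Finset.insert_comm]

/-- If M is a BZ datum (satisfying (BZ-1) and (BZ-2) with M_∅ = M_Ĩ = 0), then
its complement M*, defined by (M*)_k = M_{Ĩ∖k}, again satisfies (BZ-1) and (BZ-2). -/
theorem stmt2 (n m : ℤ) (hm : 0 < m) (M : Finset ℤ → ℤ)
    (h0 : M ∅ = 0) (h1 : M (Itilde n m) = 0)
    (hBZ1 : BZ1 n m M) (hBZ2 : BZ2 n m M) :
    BZ1 n m (fun k => M (Itilde n m \ k)) ∧ BZ2 n m (fun k => M (Itilde n m \ k)) := by
  constructor
  · intro i j k hi hj hij hk hik hjk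
    have hcsub : Itilde n m \ insert i (insert j k) ⊆ Itilde n m := Finset.sdiff_subset
    have hic : i ∉ Itilde n m \ insert i (insert j k) := by simp
    have hjc : j ∉ Itilde n m \ insert i (insert j k) := by simp
    have e1 : Itilde n m \ insert i k = insert j (Itilde n m \ insert i (insert j k)) := by
      rw [compl_eq_insert _ _ j hj (by simp [hij.symm, hjk]), Finset.insert_comm j i]
    have e2 : Itilde n m \ insert j k = insert i (Itilde n m \ insert i (insert j k)) := by
      rw [compl_eq_insert _ _ i hi (by simp [hij, hik])]
    have e3 : Itilde n m \ k =
        insert i (insert j (Itilde n m \ insert i (insert j k))) := by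
      rw [compl2_eq_insert _ _ i j hi hj hij hik hjk]
    simp only [e1, e2, e3]
    have := hBZ1 i j (Itilde n m \ insert i (insert j k)) hi hj hij hcsub hic hjc
    omega
  · intro i j l k hi hj hl hij hjl hk hik hjk hlk
    have hij' : i ≠ j := ne_of_lt hij
    have hjl' : j ≠ l := ne_of_lt hjl
    have hil' : i ≠ l := ne_of_lt (lt_trans hij hjl)
    have hcsub : Itilde n m \ insert i (insert j (insert l k)) ⊆ Itilde n m :=
      Finset.sdiff_subset
    have hic : i ∉ Itilde n m \ insert i (insert j (insert l k)) := by simp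
    have hjc : j ∉ Itilde n m \ insert i (insert j (insert l k)) := by simp
    have hlc : l ∉ Itilde n m \ insert i (insert j (insert l k)) := by simp
    have e1 : Itilde n m \ insert i (insert l k) =
        insert j (Itilde n m \ insert i (insert j (insert l k))) := by
      rw [compl_eq_insert _ _ j hj (by simp [hij'.symm, hjl', hjk]),
        Finset.insert_comm j i]
    have e2 : Itilde n m \ insert j k =
        insert i (insert l (Itilde n m \ insert i (insert j (insert l k)))) := by
      rw [compl2_eq_insert _ _ i l hi hl hil' (by simp [hij', hik])
        (by simp [hjl'.symm, hlk]), Finset.insert_comm l j]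
    have e3 : Itilde n m \ insert i (insert j k) =
        insert l (Itilde n m \ insert i (insert j (insert l k))) := by
      rw [compl_eq_insert _ _ l hl (by simp [hil'.symm, hjl'.symm, hlk]),
        Finset.insert_comm l i, Finset.insert_comm l j]
    have e4 : Itilde n m \ insert l k =
        insert i (insert j (Itilde n m \ insert i (insert j (insert l k)))) := by
      rw [compl2_eq_insert _ _ i j hi hj hij' (by simp [hil', hik])
        (by simp [hjl', hjk])]
    have e5 : Itilde n m \ insert j (insert l k) =
        insert i (Itilde n m \ insert i (insert j (insert l k))) := by
      rw [compl_eq_insert _ _ i hi (by simp [hij', hil', hik])]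
    have e6 : Itilde n m \ insert i k =
        insert j (insert l (Itilde n m \ insert i (insert j (insert l k)))) := by
      rw [compl2_eq_insert _ _ j l hj hl hjl' (by simp [hij'.symm, hjk])
        (by simp [hil'.symm, hlk]), Finset.insert_comm l i, Finset.insert_comm j i]
    simp only [e1, e2, e3, e4, e5, e6]
    have := hBZ2 i j l (Itilde n m \ insert i (insert j (insert l k)))
      hi hj hl hij hjl hcsub hic hjc hlc
    omega
end

section
/- Let M be an e-BZ datum associated to the finite interval I = [n+1, n+m]: a collection of integers M_k indexed by nonempty proper subsets k of Ĩ = [n+1, n+m+1], satisfying the edge inequalities (BZ-1), the tropical Plücker relations (BZ-2), and the normalization M_{[n+1,i]} = 0 for every i ∈ I. Then M_k ≤ 0 for every Maya diagram k. -/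
lemma key (n m : ℤ) (M : Finset ℤ → ℤ) (h1 : BZ1 n m M) (i : ℤ) (hi : i ∈ Itilde n m)
    (S : Finset ℤ) :
    S ⊆ Itilde n m → ∀ b ⊆ Itilde n m, i ∉ b → (∀ x ∈ S, x ∉ b ∧ x ≠ i) →
      M (b ∪ S) + M (insert i b) ≤ M (insert i (b ∪ S)) + M b := by
  induction S using Finset.induction_on with
  | empty => intro _ b _ _ _; simp [add_comm]
  | @insert j S' hjS ih =>
    intro hS b hb hib hdis
    have hj' : j ∈ Itilde n m := hS (Finset.mem_insert_self _ _)
    have hS' : S' ⊆ Itilde n m := fun x hx => hS (Finset.mem_insert_of_mem hx)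
    have hdis' : ∀ x ∈ S', x ∉ b ∧ x ≠ i := fun x hx => hdis x (Finset.mem_insert_of_mem hx)
    have hjb : j ∉ b := (hdis j (Finset.mem_insert_self _ _)).1
    have hji : j ≠ i := (hdis j (Finset.mem_insert_self _ _)).2
    have hjb' : j ∉ b ∪ S' := by
      simp only [Finset.mem_union, not_or]; exact ⟨hjb, hjS⟩
    have hib' : i ∉ b ∪ S' := by
      simp only [Finset.mem_union, not_or]
      exact ⟨hib, fun h => (hdis' i h).2 rfl⟩
    have hbS' : b ∪ S' ⊆ Itilde n m := Finset.union_subset hb hS'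
    have h2 := h1 i j (b ∪ S') hi hj' (Ne.symm hji) hbS' hib' hjb'
    have h3 := ih hS' b hb hib hdis'
    rw [Finset.union_insert]
    linarith

/-- Initial intervals evaluate to 0. -/
lemma Minit (n m : ℤ) (M : Finset ℤ → ℤ) (hM : eBZ n m M) (i : ℤ)
    (h1 : n ≤ i) (h2 : i ≤ n + m + 1) : M (Finset.Icc (n + 1) i) = 0 := by
  rcases eq_or_lt_of_le h1 with h | h
  · have : Finset.Icc (n + 1) i = (∅ : Finset ℤ) := by
      rw [Finset.Icc_eq_empty]; omega
    rw [this]; exact hM.1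
  rcases eq_or_lt_of_le h2 with h' | h'
  · rw [h']; exact hM.2.1
  · exact hM.2.2.2.2 i (by simp [Finset.mem_Icc]; omega)

/-- All components of an e-BZ datum are nonpositive. -/
theorem stmt3 (n m : ℤ) (hm : 0 < m) (M : Finset ℤ → ℤ) (hM : eBZ n m M) :
    ∀ k ⊆ Itilde n m, M k ≤ 0 := by
  suffices h : ∀ t : ℕ, ∀ k ⊆ Itilde n m, (Itilde n m \ k).card ≤ t → M k ≤ 0 by
    intro k hk
    exact h (Itilde n m \ k).card k hk le_rfl
  intro t
  induction t with
  | zero =>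
    intro k hk hc
    have : Itilde n m \ k = ∅ := Finset.card_eq_zero.mp (Nat.le_zero.mp hc)
    have hkk : k = Itilde n m := by
      apply Finset.Subset.antisymm hk
      intro x hx
      by_contra hxk
      exact absurd (this ▸ Finset.mem_sdiff.mpr ⟨hx, hxk⟩) (Finset.notMem_empty x)
    rw [hkk]; exact le_of_eq hM.2.1
  | succ t ih =>
    intro k hk hc
    by_cases hne : Itilde n m \ k = ∅
    · have hkk : k = Itilde n m := by
        apply Finset.Subset.antisymm hk
        intro x hx
        by_contra hxk
        exact absurd hne (Finset.ne_empty_of_mem (Finset.mem_sdiff.mpr ⟨hx, hxk⟩))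
      rw [hkk]; exact le_of_eq hM.2.1
    · have hne' : (Itilde n m \ k).Nonempty := Finset.nonempty_iff_ne_empty.mpr hne
      set i := (Itilde n m \ k).min' hne' with hi_def
      have hiI : i ∈ Itilde n m := (Finset.mem_sdiff.mp ((Itilde n m \ k).min'_mem hne')).1
      have hik : i ∉ k := (Finset.mem_sdiff.mp ((Itilde n m \ k).min'_mem hne')).2
      have hmin : ∀ x ∈ Itilde n m, x < i → x ∈ k := by
        intro x hx hxi
        by_contra hxk
        exact absurd (Finset.min'_le _ x (Finset.mem_sdiff.mpr ⟨hx, hxk⟩)) (by omega)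
      have hiI' : n + 1 ≤ i ∧ i ≤ n + m + 1 := by
        simpa [Itilde, Finset.mem_Icc] using hiI
      have hbk : Finset.Icc (n + 1) (i - 1) ⊆ k := by
        intro x hx
        simp only [Finset.mem_Icc] at hx
        exact hmin x (by simp [Itilde, Finset.mem_Icc]; omega) (by omega)
      by_cases hcase : k ⊆ Finset.Icc (n + 1) (i - 1)
      · have : k = Finset.Icc (n + 1) (i - 1) := Finset.Subset.antisymm hcase hbk
        rw [this]
        exact le_of_eq (Minit n m M hM (i - 1) (by omega) (by omega))
      · -- k has elements outside [n+1, i-1], all > i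
        set b := Finset.Icc (n + 1) (i - 1) with hb_def
        set S := k \ b with hS_def
        have hbI : b ⊆ Itilde n m := by
          intro x hx; simp only [hb_def, Finset.mem_Icc] at hx
          simp [Itilde, Finset.mem_Icc]; omega
        have hunion : b ∪ S = k := by
          rw [hS_def, Finset.union_sdiff_of_subset hbk]
        have hib : i ∉ b := by simp only [hb_def, Finset.mem_Icc, not_and]; omega
        have hSI : S ⊆ Itilde n m := fun x hx => hk (Finset.mem_sdiff.mp hx).1
        have hdis : ∀ x ∈ S, x ∉ b ∧ x ≠ i := by
          intro x hx
          rcases Finset.mem_sdiff.mp hx with ⟨hxk, hxb⟩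
          exact ⟨hxb, fun h => hik (h ▸ hxk)⟩
        have hkey := key n m M hM.2.2.1 i hiI S hSI b hbI hib hdis
        rw [hunion] at hkey
        have hinsb : insert i b = Finset.Icc (n + 1) i := by
          ext x
          simp only [Finset.mem_insert, hb_def, Finset.mem_Icc]
          omega
        have hMib : M (insert i b) = 0 := by
          rw [hinsb]; exact Minit n m M hM i (by omega) (by omega)
        have hMb : M b = 0 := Minit n m M hM (i - 1) (by omega) (by omega)
        have hnext : M (insert i k) ≤ 0 := by
          apply ih (insert i k)
          · exact Finset.insert_subset hiI hk
          · have : Itilde n m \ insert i k = (Itilde n m \ k).erase i := by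
              ext x
              simp only [Finset.mem_sdiff, Finset.mem_insert, Finset.mem_erase, not_or]
              tauto
            rw [this, Finset.card_erase_of_mem (Finset.mem_sdiff.mpr ⟨hiI, hik⟩)]
            omega
        linarith
end

section
/- Let M be an e-BZ datum associated to I = [n+1, n+m]. Define wt^∨(M) := Σ_{i∈I} M_{[i+1,n+m+1]} h_i and define the sharp of M by (M^♯)_k := M_{k^c} − ⟨wt^∨(M), k⟩, where k^c = Ĩ∖k and ⟨wt^∨(M), k⟩ = Σ_{i∈I} M_{[i+1,n+m+1]} ⟨h_i, k⟩. Then (M^♯)^♯ = M. -/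
/-- pairH flips sign under complement in Ĩ. -/
lemma pairH_compl (n m i : ℤ) (hi : i ∈ Finset.Icc (n + 1) (n + m)) (k : Finset ℤ) :
    pairH i (Itilde n m \ k) = - pairH i k := by
  simp only [Finset.mem_Icc] at hi
  have h1 : i ∈ Itilde n m := by simp [Itilde, Finset.mem_Icc]; omega
  have h2 : i + 1 ∈ Itilde n m := by simp [Itilde, Finset.mem_Icc]; omega
  unfold pairH
  simp only [Finset.mem_sdiff, h1, h2, true_and]
  by_cases hik : i ∈ k <;> by_cases hik1 : i + 1 ∈ k <;> simp [hik, hik1]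

lemma pairH_tail (n m i j : ℤ) (hj : j ∈ Finset.Icc (n + 1) (n + m)) :
    pairH j (Finset.Icc (i + 1) (n + m + 1)) = if j = i then -1 else 0 := by
  simp only [Finset.mem_Icc] at hj
  unfold pairH
  simp only [Finset.mem_Icc, not_and, not_le]
  split_ifs <;> omega

/-- wtv of a tail interval. -/
lemma wtv_tail (n m : ℤ) (M : Finset ℤ → ℤ) (i : ℤ) (hi : i ∈ Finset.Icc (n + 1) (n + m)) :
    wtv n m M (Finset.Icc (i + 1) (n + m + 1)) = - M (Finset.Icc (i + 1) (n + m + 1)) := by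
  unfold wtv
  have step : ∀ j ∈ Finset.Icc (n + 1) (n + m),
      M (Finset.Icc (j + 1) (n + m + 1)) * pairH j (Finset.Icc (i + 1) (n + m + 1)) =
        if j = i then -M (Finset.Icc (i + 1) (n + m + 1)) else 0 := by
    intro j hj
    rw [pairH_tail n m i j hj]
    split_ifs with h
    · subst h; ring
    · ring
  rw [Finset.sum_congr rfl step, Finset.sum_ite_eq' _ i, if_pos hi]

lemma compl_tail (n m i : ℤ) (hi : i ∈ Finset.Icc (n + 1) (n + m)) :
    Itilde n m \ Finset.Icc (i + 1) (n + m + 1) = Finset.Icc (n + 1) i := by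
  simp only [Finset.mem_Icc] at hi
  ext x
  simp only [Itilde, Finset.mem_sdiff, Finset.mem_Icc, not_and, not_le]
  omega

/-- sharp fixes tail-interval values. -/
lemma sharp_tail (n m : ℤ) (M : Finset ℤ → ℤ) (hM : eBZ n m M) (i : ℤ)
    (hi : i ∈ Finset.Icc (n + 1) (n + m)) :
    sharp n m M (Finset.Icc (i + 1) (n + m + 1)) = M (Finset.Icc (i + 1) (n + m + 1)) := by
  unfold sharp
  rw [compl_tail n m i hi, wtv_tail n m M i hi, hM.2.2.2.2 i hi]
  ring

/-- The sharp operation is an involution: (M^♯)^♯ = M on Maya diagrams. -/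
theorem stmt4 (n m : ℤ) (hm : 0 < m) (M : Finset ℤ → ℤ) (hM : eBZ n m M) :
    ∀ k ⊆ Itilde n m, sharp n m (sharp n m M) k = M k := by
  intro k hk
  have hcompl : Itilde n m \ (Itilde n m \ k) = k := by
    rw [Finset.sdiff_sdiff_self_left, Finset.inter_eq_right.mpr hk]
  have h1 : wtv n m (sharp n m M) k = wtv n m M k := by
    unfold wtv
    exact Finset.sum_congr rfl (fun j hj => by rw [sharp_tail n m M hM j hj])
  have h2 : wtv n m M (Itilde n m \ k) = - wtv n m M k := by
    unfold wtv
    rw [← Finset.sum_neg_distrib]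
    exact Finset.sum_congr rfl (fun j hj => by rw [pairH_compl n m j hj k]; ring)
  show sharp n m M (Itilde n m \ k) - wtv n m (sharp n m M) k = M k
  rw [h1]
  show M (Itilde n m \ (Itilde n m \ k)) - wtv n m M (Itilde n m \ k) - wtv n m M k = M k
  rw [hcompl, h2]
  ring
end

section
/- Let M be an e-BZ datum associated to I = [n+1, n+m], and define M^♯ by (M^♯)_k := M_{Ĩ∖k} − Σ_{i∈I} M_{[i+1,n+m+1]} ⟨h_i, k⟩. Then M^♯ is again an e-BZ datum: it satisfies the edge inequalities (BZ-1), the tropical Plücker relations (BZ-2), and the normalization (M^♯)_{[n+1,i]} = 0 for all i ∈ I. -/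
lemma pairH_eq (a : ℤ) (k : Finset ℤ) :
    pairH a k = (if a ∈ k then (1:ℤ) else 0) - (if a + 1 ∈ k then 1 else 0) := by
  unfold pairH
  by_cases h1 : a ∈ k <;> by_cases h2 : a + 1 ∈ k <;> simp [h1, h2]

lemma pairH_insert (a x : ℤ) (k : Finset ℤ) (hx : x ∉ k) :
    pairH a (insert x k) =
      pairH a k + (if a = x then 1 else 0) - (if a + 1 = x then 1 else 0) := by
  rw [pairH_eq, pairH_eq]
  by_cases h1 : a = x <;> by_cases h2 : a + 1 = x <;>
    simp [Finset.mem_insert, h1, h2] <;> simp_all <;> ring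

/-- the increment of `wtv` upon inserting a fresh element. -/
noncomputable def wC (n m : ℤ) (M : Finset ℤ → ℤ) (x : ℤ) : ℤ :=
  ∑ a ∈ Finset.Icc (n + 1) (n + m),
    M (Finset.Icc (a + 1) (n + m + 1)) * ((if a = x then 1 else 0) - (if a + 1 = x then 1 else 0))

lemma wtv_insert (n m : ℤ) (M : Finset ℤ → ℤ) (x : ℤ) (k : Finset ℤ) (hx : x ∉ k) :
    wtv n m M (insert x k) = wtv n m M k + wC n m M x := by
  unfold wtv wC
  rw [← Finset.sum_add_distrib]
  refine Finset.sum_congr rfl fun a _ => ?_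
  rw [pairH_insert a x k hx]; ring

/-- complement via insert -/
lemma compl_insert (t s : Finset ℤ) (a : ℤ) (ha : a ∈ t) (hs : a ∉ s) :
    t \ s = insert a (t \ insert a s) := by
  rw [Finset.sdiff_insert, Finset.insert_erase (by simp [Finset.mem_sdiff, ha, hs])]

lemma sdiff_eq_insert (t s s' : Finset ℤ) (c : ℤ) (hc : c ∈ t) (hcs : c ∉ s)
    (h : insert c s = s') : t \ s = insert c (t \ s') := by
  subst h; exact compl_insert t s c hc hcs

/-- The sharp of an e-BZ datum is again an e-BZ datum. -/
theorem stmt5 (n m : ℤ) (hm : 0 < m) (M : Finset ℤ → ℤ) (hM : eBZ n m M) :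
    eBZ n m (sharp n m M) := by
  obtain ⟨h0, hI, h1, h2, hN⟩ := hM
  have hsub : ∀ a ∈ Finset.Icc (n+1) (n+m), a ∈ Itilde n m ∧ a + 1 ∈ Itilde n m := by
    intro a ha
    simp only [Finset.mem_Icc, Itilde] at *
    omega
  refine ⟨?_, ?_, ?_, ?_, ?_⟩
  · -- sharp ∅ = 0
    simp only [sharp, Finset.sdiff_empty, hI, wtv]
    have : ∀ a, pairH a (∅ : Finset ℤ) = 0 := by intro a; simp [pairH]
    simp [this]
  · -- sharp Ĩ = 0
    simp only [sharp, Finset.sdiff_self, h0, wtv]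
    have : ∀ a ∈ Finset.Icc (n+1) (n+m),
        M (Finset.Icc (a + 1) (n + m + 1)) * pairH a (Itilde n m) = 0 := by
      intro a ha
      obtain ⟨h, h'⟩ := hsub a ha
      simp [pairH, h, h']
    rw [Finset.sum_congr rfl this]
    simp
  · -- BZ1
    intro i j k hi hj hij hk hik hjk
    set K := Itilde n m \ insert i (insert j k) with hK
    have hiK : i ∉ K := by simp [hK]
    have hjK : j ∉ K := by simp [hK]
    have hKsub : K ⊆ Itilde n m := Finset.sdiff_subset
    have hbz := h1 i j K hi hj hij hKsub hiK hjK
    have tac : ∀ x : Finset ℤ → Prop, True := fun _ => trivial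
    have c1 : Itilde n m \ insert i k = insert j K := by
      ext x
      simp only [hK, Finset.mem_sdiff, Finset.mem_insert, not_or]
      by_cases hx1 : x = i <;> by_cases hx2 : x = j <;> simp_all <;> tauto
    have c2 : Itilde n m \ insert j k = insert i K := by
      ext x
      simp only [hK, Finset.mem_sdiff, Finset.mem_insert, not_or]
      by_cases hx1 : x = i <;> by_cases hx2 : x = j <;> simp_all <;> tauto
    have c3 : Itilde n m \ k = insert i (insert j K) := by
      ext x
      simp only [hK, Finset.mem_sdiff, Finset.mem_insert, not_or]
      by_cases hx1 : x = i <;> by_cases hx2 : x = j <;> simp_all <;> tauto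
    -- wtv identities
    have w1 := wtv_insert n m M i k hik
    have w2 := wtv_insert n m M j k hjk
    have w3 := wtv_insert n m M i (insert j k) (by simp [Finset.mem_insert, hik, hij])
    have w4 := wtv_insert n m M j k hjk
    simp only [sharp, c1, c2, c3, hK.symm]
    rw [w1, w2, w3, w4]
    omega
  · -- BZ2
    intro i j l k hi hj hl hij hjl hk hik hjk hlk
    have hijne : i ≠ j := ne_of_lt hij
    have hjlne : j ≠ l := ne_of_lt hjl
    have hilne : i ≠ l := ne_of_lt (lt_trans hij hjl)
    set K := Itilde n m \ insert i (insert j (insert l k)) with hK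
    have hiK : i ∉ K := by simp [hK]
    have hjK : j ∉ K := by simp [hK]
    have hlK : l ∉ K := by simp [hK]
    have hKsub : K ⊆ Itilde n m := Finset.sdiff_subset
    have hbz := h2 i j l K hi hj hl hij hjl hKsub hiK hjK hlK
    have cil : Itilde n m \ insert i (insert l k) = insert j K := by
      rw [sdiff_eq_insert (Itilde n m) _ _ j hj
        (by simp [Finset.mem_insert, hjk, hijne.symm, hjlne]) (Finset.insert_comm j i _), hK]
    have cij : Itilde n m \ insert i (insert j k) = insert l K := by
      rw [sdiff_eq_insert (Itilde n m) _ _ l hl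
        (by simp [Finset.mem_insert, hlk, hilne.symm, hjlne.symm])
        (by rw [Finset.insert_comm l i, Finset.insert_comm l j]), hK]
    have cjl : Itilde n m \ insert j (insert l k) = insert i K := by
      rw [sdiff_eq_insert (Itilde n m) _ _ i hi
        (by simp [Finset.mem_insert, hik, hijne, hilne]) rfl, hK]
    have cj : Itilde n m \ insert j k = insert i (insert l K) := by
      rw [compl_insert (Itilde n m) (insert j k) i hi
        (by simp [Finset.mem_insert, hik, hijne]), cij]
    have cl : Itilde n m \ insert l k = insert i (insert j K) := by
      rw [compl_insert (Itilde n m) (insert l k) i hi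
        (by simp [Finset.mem_insert, hik, hilne]), cil]
    have ci : Itilde n m \ insert i k = insert j (insert l K) := by
      rw [compl_insert (Itilde n m) (insert i k) j hj
        (by simp [Finset.mem_insert, hjk, hijne.symm]), Finset.insert_comm j i, cij]
    -- wtv identities
    have wi := wtv_insert n m M i k hik
    have wj := wtv_insert n m M j k hjk
    have wl := wtv_insert n m M l k hlk
    have wil := wtv_insert n m M i (insert l k) (by simp [Finset.mem_insert, hik, hilne])
    have wij := wtv_insert n m M i (insert j k) (by simp [Finset.mem_insert, hik, hijne])
    have wjl := wtv_insert n m M j (insert l k) (by simp [Finset.mem_insert, hjk, hjlne])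
    simp only [sharp, cil, cj, cij, cl, cjl, ci]
    rw [wil, wij, wjl, wi, wj, wl]
    omega
  · -- eNorm
    intro i hi
    rw [Finset.mem_Icc] at hi
    have c : Itilde n m \ Finset.Icc (n+1) i = Finset.Icc (i+1) (n+m+1) := by
      ext x
      simp only [Itilde, Finset.mem_sdiff, Finset.mem_Icc]
      omega
    have w : wtv n m M (Finset.Icc (n+1) i) = M (Finset.Icc (i+1) (n+m+1)) := by
      unfold wtv
      rw [Finset.sum_eq_single i]
      · have : pairH i (Finset.Icc (n+1) i) = 1 := by
          simp only [pairH, Finset.mem_Icc]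
          split_ifs <;> omega
        rw [this, mul_one]
      · intro b hb hbi
        rw [Finset.mem_Icc] at hb
        have : pairH b (Finset.Icc (n+1) i) = 0 := by
          simp only [pairH, Finset.mem_Icc]
          split_ifs <;> omega
        rw [this, mul_zero]
      · intro h
        exact absurd (Finset.mem_Icc.mpr ⟨hi.1, hi.2⟩) h
    simp [sharp, c, w]
end

section
/- Let M be an e-BZ datum associated to I = [n+1, n+m]. Define ε_i(M) := −M_{[n+1,i−1]∪{i+1}} and ε_i*(M) := −M_{[i+1,n+m+1]} − M_{{i}∪[i+2,n+m+1]} + M_{[i+2,n+m+1]} + M_{[i,n+m+1]}. Then ε_i(M^♯) = ε_i*(M), where (M^♯)_k = M_{Ĩ∖k} − Σ_{j∈I} M_{[j+1,n+m+1]} ⟨h_j, k⟩. -/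
/-- ε_i(M^♯) = ε_i*(M). -/
theorem stmt6 (n m : ℤ) (hm : 0 < m) (M : Finset ℤ → ℤ) (hM : eBZ n m M)
    (i : ℤ) (hi : i ∈ Finset.Icc (n + 1) (n + m)) :
    -(sharp n m M (insert (i + 1) (Finset.Icc (n + 1) (i - 1)))) =
      -M (Finset.Icc (i + 1) (n + m + 1)) - M (insert i (Finset.Icc (i + 2) (n + m + 1)))
        + M (Finset.Icc (i + 2) (n + m + 1)) + M (Finset.Icc i (n + m + 1)) := by
  simp only [Finset.mem_Icc] at hi
  set k : Finset ℤ := insert (i + 1) (Finset.Icc (n + 1) (i - 1)) with hk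
  have hmem : ∀ x : ℤ, x ∈ k ↔ (x = i + 1 ∨ (n + 1 ≤ x ∧ x ≤ i - 1)) := by
    intro x; simp [hk, Finset.mem_insert, Finset.mem_Icc]
  have hset : Itilde n m \ k = insert i (Finset.Icc (i + 2) (n + m + 1)) := by
    ext x
    simp only [Itilde, Finset.mem_sdiff, Finset.mem_insert, Finset.mem_Icc, hmem]
    omega
  have hfun : ∀ j ∈ Finset.Icc (n + 1) (n + m),
      M (Finset.Icc (j + 1) (n + m + 1)) * pairH j k =
        (if j = i - 1 then M (Finset.Icc i (n + m + 1)) else 0) +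
        (if j = i then -(M (Finset.Icc (i + 1) (n + m + 1))) else 0) +
        (if j = i + 1 then M (Finset.Icc (i + 2) (n + m + 1)) else 0) := by
    intro j hj
    simp only [Finset.mem_Icc] at hj
    by_cases h1 : j = i - 1
    · have hin : j ∈ k := by rw [hmem]; omega
      have hout : j + 1 ∉ k := by rw [hmem]; omega
      have hp : pairH j k = 1 := by rw [pairH, if_pos ⟨hin, hout⟩]
      rw [hp, show j + 1 = i by omega, if_pos h1, if_neg (by omega), if_neg (by omega)]
      ring
    · by_cases h2 : j = i
      · have hout : j ∉ k := by rw [hmem]; omega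
        have hin : j + 1 ∈ k := by rw [hmem]; omega
        have hp : pairH j k = -1 := by
          rw [pairH, if_neg (fun hc => hout hc.1), if_pos ⟨hout, hin⟩]
        rw [hp, show j + 1 = i + 1 by omega, if_neg h1, if_pos h2, if_neg (by omega)]
        ring
      · by_cases h3 : j = i + 1
        · have hin : j ∈ k := by rw [hmem]; omega
          have hout : j + 1 ∉ k := by rw [hmem]; omega
          have hp : pairH j k = 1 := by rw [pairH, if_pos ⟨hin, hout⟩]
          rw [hp, show j + 1 = i + 2 by omega, if_neg h1, if_neg h2, if_pos h3]
          ring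
        · have hiff : j ∈ k ↔ j + 1 ∈ k := by rw [hmem, hmem]; omega
          have hp : pairH j k = 0 := by
            rw [pairH, if_neg (fun hc => hc.2 (hiff.1 hc.1)),
              if_neg (fun hc => hc.1 (hiff.2 hc.2))]
          rw [hp, if_neg h1, if_neg h2, if_neg h3]
          ring
  have hsum : wtv n m M k =
      M (Finset.Icc i (n + m + 1)) + M (Finset.Icc (i + 2) (n + m + 1))
        - M (Finset.Icc (i + 1) (n + m + 1)) := by
    rw [wtv, Finset.sum_congr rfl hfun]
    rw [Finset.sum_add_distrib, Finset.sum_add_distrib]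
    rw [Finset.sum_ite_eq' _ (i - 1), Finset.sum_ite_eq' _ i, Finset.sum_ite_eq' _ (i + 1)]
    have hmid : i ∈ Finset.Icc (n + 1) (n + m) := by simp only [Finset.mem_Icc]; omega
    rw [if_pos hmid]
    by_cases hlo : i - 1 ∈ Finset.Icc (n + 1) (n + m)
    · rw [if_pos hlo]
      by_cases hhi : i + 1 ∈ Finset.Icc (n + 1) (n + m)
      · rw [if_pos hhi]; ring
      · rw [if_neg hhi]
        simp only [Finset.mem_Icc] at hhi
        have : Finset.Icc (i + 2) (n + m + 1) = ∅ := Finset.Icc_eq_empty (by omega)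
        rw [this, hM.1]; ring
    · rw [if_neg hlo]
      simp only [Finset.mem_Icc] at hlo
      have hieq : i = n + 1 := by omega
      have h0 : M (Finset.Icc i (n + m + 1)) = 0 := by rw [hieq]; exact hM.2.1
      by_cases hhi : i + 1 ∈ Finset.Icc (n + 1) (n + m)
      · rw [if_pos hhi, h0]; ring
      · rw [if_neg hhi]
        simp only [Finset.mem_Icc] at hhi
        have : Finset.Icc (i + 2) (n + m + 1) = ∅ := Finset.Icc_eq_empty (by omega)
        rw [this, hM.1, h0]; ring
  simp only [sharp, hset, hsum]
  ring
end

section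
/- Let M be an e-BZ datum on I = [n+1, n+m] and let i ∈ I. Let ℳ(i)* denote the set of Maya diagrams k ⊆ Ĩ with i ∉ k and i+1 ∈ k, and ℳ(i) those with i ∈ k, i+1 ∉ k. Suppose N and N' are two e-BZ data such that N_k = N'_k = M_k + 1 for all k ∈ ℳ(i)*, and N_k = N'_k = M_k for all Maya diagrams k not in ℳ(i) ∪ ℳ(i)*. Then N = N', i.e., N_k = N'_k also for all k ∈ ℳ(i). -/
/-- The induction measure: missing elements below i plus elements above i+1. -/
noncomputable def mayaMu (n i : ℤ) (k : Finset ℤ) : ℕ :=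
  ((Finset.Icc (n+1) i) \ k).card + (k.filter (fun x => i + 2 ≤ x)).card

lemma caseC (n m i : ℤ) (k : Finset ℤ) (hk : k ⊆ Itilde n m)
    (hik : i ∈ k) (hi1 : i + 1 ∉ k)
    (hT : Finset.Icc (n+1) i \ k = ∅)
    (hS : k.filter (fun x => i + 2 ≤ x) = ∅) :
    k = Finset.Icc (n+1) i := by
  ext x
  constructor
  · intro hx
    have hxI := hk hx
    simp only [Itilde, Finset.mem_Icc] at hxI
    have h2 : ¬ (i + 2 ≤ x) := by
      intro h
      have : x ∈ k.filter (fun x => i + 2 ≤ x) := Finset.mem_filter.mpr ⟨hx, h⟩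
      simp [hS] at this
    have h3 : x ≠ i + 1 := fun h => hi1 (h ▸ hx)
    simp only [Finset.mem_Icc]
    omega
  · intro hx
    by_contra hxk
    have : x ∈ Finset.Icc (n+1) i \ k := Finset.mem_sdiff.mpr ⟨hx, hxk⟩
    simp [hT] at this

lemma key_s7 (n m : ℤ) (M N N' : Finset ℤ → ℤ) (i : ℤ)
    (hi : i ∈ Finset.Icc (n + 1) (n + m))
    (hN : eBZ n m N) (hN' : eBZ n m N')
    (h1 : ∀ k ⊆ Itilde n m, i ∉ k → i + 1 ∈ k → N k = M k + 1 ∧ N' k = M k + 1)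
    (h2 : ∀ k ⊆ Itilde n m, ¬(i ∈ k ∧ i + 1 ∉ k) → ¬(i ∉ k ∧ i + 1 ∈ k) →
      N k = M k ∧ N' k = M k) :
    ∀ c : ℕ, ∀ k, k ⊆ Itilde n m → i ∈ k → i + 1 ∉ k → mayaMu n i k ≤ c → N k = N' k := by
  have hin : n + 1 ≤ i ∧ i ≤ n + m := Finset.mem_Icc.mp hi
  have hiI : i ∈ Itilde n m := by simp only [Itilde, Finset.mem_Icc]; omega
  have hi1I : i + 1 ∈ Itilde n m := by simp only [Itilde, Finset.mem_Icc]; omega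
  have base : ∀ k, k ⊆ Itilde n m → i ∈ k → i + 1 ∉ k →
      Finset.Icc (n+1) i \ k = ∅ → k.filter (fun x => i + 2 ≤ x) = ∅ → N k = N' k := by
    intro k hk hik hi1 hT hS
    rw [caseC n m i k hk hik hi1 hT hS, hN.2.2.2.2 i hi, hN'.2.2.2.2 i hi]
  intro c
  induction c with
  | zero =>
    intro k hk hik hi1 hmu
    unfold mayaMu at hmu
    exact base k hk hik hi1 (Finset.card_eq_zero.mp (by omega))
      (Finset.card_eq_zero.mp (by omega))
  | succ c ih =>
    intro k hk hik hi1 hmu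
    rcases Finset.eq_empty_or_nonempty (Finset.Icc (n+1) i \ k) with hT | ⟨s, hs⟩
    · rcases Finset.eq_empty_or_nonempty (k.filter (fun x => i + 2 ≤ x)) with hS | ⟨l, hl⟩
      · exact base k hk hik hi1 hT hS
      · -- Case B: l ∈ k with i + 2 ≤ l
        obtain ⟨hlk, hll⟩ := Finset.mem_filter.mp hl
        have hlI : l ∈ Itilde n m := hk hlk
        have hke : (k.erase i).erase l ⊆ Itilde n m :=
          ((Finset.erase_subset _ _).trans (Finset.erase_subset _ _)).trans hk
        have hik'' : i ∉ (k.erase i).erase l := by simp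
        have hi1k'' : i + 1 ∉ (k.erase i).erase l := by
          intro h
          exact hi1 (Finset.mem_of_mem_erase (Finset.mem_of_mem_erase h))
        have hlk'' : l ∉ (k.erase i).erase l := Finset.notMem_erase _ _
        have eqN := hN.2.2.2.1 i (i+1) l ((k.erase i).erase l) hiI hi1I hlI
          (by omega) (by omega) hke hik'' hi1k'' hlk''
        have eqN' := hN'.2.2.2.1 i (i+1) l ((k.erase i).erase l) hiI hi1I hlI
          (by omega) (by omega) hke hik'' hi1k'' hlk''
        have hA : insert l ((k.erase i).erase l) = k.erase i :=
          Finset.insert_erase (Finset.mem_erase.mpr ⟨by omega, hlk⟩)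
        have hC : insert i (k.erase i) = k := Finset.insert_erase hik
        have hB : insert i ((k.erase i).erase l) = k.erase l := by
          rw [Finset.erase_right_comm]
          exact Finset.insert_erase (Finset.mem_erase.mpr ⟨by omega, hik⟩)
        rw [hA, hC, hB] at eqN eqN'
        -- known sets
        have hkeI : k.erase i ⊆ Itilde n m := (Finset.erase_subset _ _).trans hk
        have sub1 : insert (i+1) ((k.erase i).erase l) ⊆ Itilde n m :=
          Finset.insert_subset hi1I hke
        have e1 := h1 _ sub1 (by simp <;> omega) (Finset.mem_insert_self _ _)
        have sub2 : insert i (insert (i+1) ((k.erase i).erase l)) ⊆ Itilde n m :=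
          Finset.insert_subset hiI sub1
        have hmem2 : i + 1 ∈ insert i (insert (i+1) ((k.erase i).erase l)) :=
          Finset.mem_insert_of_mem (Finset.mem_insert_self _ _)
        have e2 := h2 _ sub2 (fun h => h.2 hmem2) (fun h => h.1 (Finset.mem_insert_self _ _))
        have hi3 : i ∉ k.erase i := Finset.notMem_erase _ _
        have hi13 : i + 1 ∉ k.erase i := fun h => hi1 (Finset.mem_of_mem_erase h)
        have e3 := h2 _ hkeI (fun h => hi3 h.1) (fun h => hi13 h.2)
        have sub4 : insert (i+1) (k.erase i) ⊆ Itilde n m := Finset.insert_subset hi1I hkeI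
        have e4 := h1 _ sub4 (by simp <;> omega) (Finset.mem_insert_self _ _)
        -- induction on k.erase l
        have hmuB : mayaMu n i (k.erase l) ≤ c := by
          have hTe : Finset.Icc (n+1) i \ (k.erase l) = Finset.Icc (n+1) i \ k := by
            ext x
            simp only [Finset.mem_sdiff, Finset.mem_erase, Finset.mem_Icc]
            constructor
            · rintro ⟨hx, h⟩
              exact ⟨hx, fun hxk => h ⟨by omega, hxk⟩⟩
            · rintro ⟨hx, h⟩
              exact ⟨hx, fun he => h he.2⟩
          have hsub : (k.erase l).filter (fun x => i + 2 ≤ x) ⊆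
              k.filter (fun x => i + 2 ≤ x) :=
            Finset.filter_subset_filter _ (Finset.erase_subset _ _)
          have hlt : ((k.erase l).filter (fun x => i + 2 ≤ x)).card <
              (k.filter (fun x => i + 2 ≤ x)).card :=
            Finset.card_lt_card ((Finset.ssubset_iff_of_subset hsub).mpr
              ⟨l, hl, by simp⟩)
          unfold mayaMu at hmu ⊢
          rw [hTe]
          omega
        have e5 := ih (k.erase l) ((Finset.erase_subset _ _).trans hk)
          (Finset.mem_erase.mpr ⟨by omega, hik⟩)
          (fun h => hi1 (Finset.mem_of_mem_erase h)) hmuB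
        rw [e1.1, e2.1, e3.1, e4.1, e5] at eqN
        rw [e1.2, e2.2, e3.2, e4.2] at eqN'
        have := eqN.trans eqN'.symm
        omega
    · -- Case A: s < i with s ∉ k
      obtain ⟨hsIcc, hsk⟩ := Finset.mem_sdiff.mp hs
      have hsb : n + 1 ≤ s ∧ s ≤ i := Finset.mem_Icc.mp hsIcc
      have hsi : s ≠ i := fun h => hsk (h ▸ hik)
      have hslt : s < i := lt_of_le_of_ne hsb.2 hsi
      have hsI : s ∈ Itilde n m := by simp only [Itilde, Finset.mem_Icc]; omega
      have hke : k.erase i ⊆ Itilde n m := (Finset.erase_subset _ _).trans hk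
      have hik'' : i ∉ k.erase i := Finset.notMem_erase _ _
      have hi1k'' : i + 1 ∉ k.erase i := fun h => hi1 (Finset.mem_of_mem_erase h)
      have hsk'' : s ∉ k.erase i := fun h => hsk (Finset.mem_of_mem_erase h)
      have eqN := hN.2.2.2.1 s i (i+1) (k.erase i) hsI hiI hi1I hslt (by omega)
        hke hsk'' hik'' hi1k''
      have eqN' := hN'.2.2.2.1 s i (i+1) (k.erase i) hsI hiI hi1I hslt (by omega)
        hke hsk'' hik'' hi1k''
      rw [Finset.insert_erase hik] at eqN eqN'
      have sub1 : insert s (insert (i+1) (k.erase i)) ⊆ Itilde n m :=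
        Finset.insert_subset hsI (Finset.insert_subset hi1I hke)
      have e1 := h1 _ sub1 (by simp <;> omega)
        (Finset.mem_insert_of_mem (Finset.mem_insert_self _ _))
      have sub2 : insert (i+1) (k.erase i) ⊆ Itilde n m := Finset.insert_subset hi1I hke
      have e2 := h1 _ sub2 (by simp <;> omega) (Finset.mem_insert_self _ _)
      have sub3 : insert i (insert (i+1) (k.erase i)) ⊆ Itilde n m :=
        Finset.insert_subset hiI sub2
      have hmem3 : i + 1 ∈ insert i (insert (i+1) (k.erase i)) :=
        Finset.mem_insert_of_mem (Finset.mem_insert_self _ _)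
      have e3 := h2 _ sub3 (fun h => h.2 hmem3) (fun h => h.1 (Finset.mem_insert_self _ _))
      have sub4 : insert s (k.erase i) ⊆ Itilde n m := Finset.insert_subset hsI hke
      have hi4 : i ∉ insert s (k.erase i) := by simp <;> omega
      have hnm4 : i + 1 ∉ insert s (k.erase i) := by
        intro h
        rcases Finset.mem_insert.mp h with h | h
        · omega
        · exact hi1 (Finset.mem_of_mem_erase h)
      have e4 := h2 _ sub4 (fun h => hi4 h.1) (fun h => hnm4 h.2)
      have hmuA : mayaMu n i (insert s k) ≤ c := by
        have hsub : Finset.Icc (n+1) i \ insert s k ⊆ Finset.Icc (n+1) i \ k :=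
          Finset.sdiff_subset_sdiff (Finset.Subset.refl _) (Finset.subset_insert _ _)
        have hlt : (Finset.Icc (n+1) i \ insert s k).card < (Finset.Icc (n+1) i \ k).card :=
          Finset.card_lt_card ((Finset.ssubset_iff_of_subset hsub).mpr
            ⟨s, hs, by simp⟩)
        have hfe : (insert s k).filter (fun x => i + 2 ≤ x) = k.filter (fun x => i + 2 ≤ x) := by
          rw [Finset.filter_insert, if_neg (by omega)]
        unfold mayaMu at hmu ⊢
        rw [hfe]
        omega
      have hi1ns : i + 1 ∉ insert s k := by
        intro h
        rcases Finset.mem_insert.mp h with h | h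
        · omega
        · exact hi1 h
      have e5 := ih (insert s k) (Finset.insert_subset hsI hk)
        (Finset.mem_insert_of_mem hik) hi1ns hmuA
      rw [e1.1, e2.1, e3.1, e4.1, e5] at eqN
      rw [e1.2, e2.2, e3.2, e4.2] at eqN'
      have := eqN.trans eqN'.symm
      omega

/-- Uniqueness: two e-BZ data agreeing (with prescribed values M_k + 1 on ℳ(i)* and
M_k off ℳ(i) ∪ ℳ(i)*) coincide everywhere. -/
theorem stmt7 (n m : ℤ) (hm : 0 < m) (M N N' : Finset ℤ → ℤ) (i : ℤ)
    (hi : i ∈ Finset.Icc (n + 1) (n + m))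
    (hM : eBZ n m M) (hN : eBZ n m N) (hN' : eBZ n m N')
    (h1 : ∀ k ⊆ Itilde n m, i ∉ k → i + 1 ∈ k → N k = M k + 1 ∧ N' k = M k + 1)
    (h2 : ∀ k ⊆ Itilde n m, ¬(i ∈ k ∧ i + 1 ∉ k) → ¬(i ∉ k ∧ i + 1 ∈ k) →
      N k = M k ∧ N' k = M k) :
    ∀ k ⊆ Itilde n m, N k = N' k := by
  intro k hk
  by_cases hik : i ∈ k
  · by_cases hi1 : i + 1 ∈ k
    · have h := h2 k hk (fun h => h.2 hi1) (fun h => h.1 hik)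
      omega
    · exact key_s7 n m M N N' i hi hN hN' h1 h2 (mayaMu n i k) k hk hik hi1 le_rfl
  · by_cases hi1 : i + 1 ∈ k
    · have h := h1 k hk hik hi1
      omega
    · have h := h2 k hk (fun h => hik h.1) (fun h => hi1 h.2)
      omega
end

section
/- Let M be an e-BZ datum on I = [n+1, n+m] such that M_{[n+1,i−1]∪{i+1}} = 0 for every i ∈ I (i.e., ε_i(M) = 0 for all i). Then M_k = 0 for every Maya diagram k ⊆ Ĩ. -/
def base (a : ℤ) (c : ℕ) : ℤ := ∑ j ∈ Finset.range c, (a + j)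

def Nk (a : ℤ) (k : Finset ℤ) : ℤ := (∑ x ∈ k, x) - base a k.card

lemma Nk_empty (a : ℤ) : Nk a ∅ = 0 := by simp [Nk, base]

lemma Nk_insert (a x : ℤ) (k : Finset ℤ) (hx : x ∉ k) :
    Nk a (insert x k) = Nk a k + x - (a + k.card) := by
  unfold Nk
  rw [Finset.sum_insert hx, Finset.card_insert_of_notMem hx]
  have : base a (k.card + 1) = base a k.card + (a + k.card) := Finset.sum_range_succ _ _
  rw [this]; ring

lemma Nk_erase (a x : ℤ) (k : Finset ℤ) (hx : x ∈ k) :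
    Nk a (k.erase x) = Nk a k - x + (a + k.card - 1) := by
  have h1 := Nk_insert a x (k.erase x) (Finset.notMem_erase x k)
  rw [Finset.insert_erase hx] at h1
  have h2 := Finset.card_erase_of_mem hx
  have h3 : 1 ≤ k.card := Finset.card_pos.mpr ⟨x, hx⟩
  have h4 : ((k.erase x).card : ℤ) = (k.card : ℤ) - 1 := by omega
  rw [h4] at h1
  linarith

lemma max'_ge_card (a : ℤ) (k : Finset ℤ) (hne : k.Nonempty) (hall : ∀ x ∈ k, a ≤ x) :
    a + k.card ≤ k.max' hne + 1 := by
  have hsub : k ⊆ Finset.Icc a (k.max' hne) :=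
    fun x hx => Finset.mem_Icc.mpr ⟨hall x hx, Finset.le_max' k x hx⟩
  have h1 := Finset.card_le_card hsub
  rw [Int.card_Icc] at h1
  have h2 : a ≤ k.max' hne := hall _ (k.max'_mem hne)
  omega

lemma Nk_nonneg (a : ℤ) : ∀ (c : ℕ) (k : Finset ℤ), k.card = c → (∀ x ∈ k, a ≤ x) →
    0 ≤ Nk a k := by
  intro c
  induction c with
  | zero => intro k hc _; rw [Finset.card_eq_zero.mp hc]; exact (Nk_empty a).ge
  | succ c ih =>
    intro k hc hall
    have hne : k.Nonempty := Finset.card_pos.mp (by omega)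
    have htk := k.max'_mem hne
    have h1 : 0 ≤ Nk a (k.erase (k.max' hne)) :=
      ih _ (by rw [Finset.card_erase_of_mem htk, hc]; omega) (fun x hx => hall x (Finset.mem_of_mem_erase hx))
    have h2 := max'_ge_card a k hne hall
    have h3 := Nk_erase a (k.max' hne) k htk
    rw [hc] at h2 h3
    push_cast at h2 h3
    linarith

lemma Nk_eq_zero (a : ℤ) : ∀ (c : ℕ) (k : Finset ℤ), k.card = c → (∀ x ∈ k, a ≤ x) →
    Nk a k = 0 → k = Finset.Icc a (a + (c : ℤ) - 1) := by
  intro c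
  induction c with
  | zero =>
    intro k hc _ _
    rw [Finset.card_eq_zero.mp hc]
    refine (Finset.Icc_eq_empty (by push_cast; omega)).symm
  | succ c ih =>
    intro k hc hall h0
    have hne : k.Nonempty := Finset.card_pos.mp (by omega)
    have htk := k.max'_mem hne
    have h1 : 0 ≤ Nk a (k.erase (k.max' hne)) :=
      Nk_nonneg a _ (k.erase (k.max' hne)) rfl (fun x hx => hall x (Finset.mem_of_mem_erase hx))
    have h2 := max'_ge_card a k hne hall
    have h3 := Nk_erase a (k.max' hne) k htk
    rw [hc] at h2 h3
    push_cast at h2 h3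
    have h5 : Nk a (k.erase (k.max' hne)) = 0 := by linarith
    have h6 : k.max' hne = a + c := by linarith
    have h7 := ih (k.erase (k.max' hne)) (by rw [Finset.card_erase_of_mem htk, hc]; omega) 
      (fun x hx => hall x (Finset.mem_of_mem_erase hx)) h5
    have h8 : k = insert (k.max' hne) (k.erase (k.max' hne)) := (Finset.insert_erase htk).symm
    rw [h8, h7, h6]
    ext x
    simp only [Finset.mem_insert, Finset.mem_Icc]
    push_cast
    omega

lemma Nk_Icc (a : ℤ) : ∀ t, a - 1 ≤ t → Nk a (Finset.Icc a t) = 0 := by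
  refine Int.le_induction ?_ ?_
  · rw [Finset.Icc_eq_empty (by omega)]; exact Nk_empty a
  · intro t ht ih
    have h1 : Finset.Icc a (t + 1) = insert (t + 1) (Finset.Icc a t) := by
      ext x; simp only [Finset.mem_insert, Finset.mem_Icc]; omega
    rw [h1, Nk_insert a (t+1) _ (by simp only [Finset.mem_Icc]; omega), ih, Int.card_Icc]
    omega

/-- If ε_i(M) = 0 for all i ∈ I, then M vanishes on all Maya diagrams. -/
theorem stmt9 (n m : ℤ) (hm : 0 < m) (M : Finset ℤ → ℤ) (hM : eBZ n m M)
    (hz : ∀ i ∈ Finset.Icc (n + 1) (n + m),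
      M (insert (i + 1) (Finset.Icc (n + 1) (i - 1))) = 0) :
    ∀ k ⊆ Itilde n m, M k = 0 := by
  obtain ⟨hEmpty, hFull, hBZ1, hBZ2, hNorm⟩ := hM
  have key : ∀ d : ℕ, ∀ k, k ⊆ Itilde n m → Nk (n+1) k = (d : ℤ) → M k = 0 := by
    intro d
    induction d using Nat.strong_induction_on with
    | _ d IH =>
      intro k hk hd
      have hksub : ∀ x ∈ k, n+1 ≤ x ∧ x ≤ n+m+1 := by
        intro x hx
        have := hk hx
        rw [Itilde, Finset.mem_Icc] at this
        exact this
      by_cases h0 : Nk (n+1) k = 0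
      · -- base case: k is an initial interval
        have hcm := Finset.card_le_card hk
        rw [Itilde, Int.card_Icc] at hcm
        have hk_eq := Nk_eq_zero (n+1) k.card k rfl (fun x hx => (hksub x hx).1) h0
        by_cases hc0 : k.card = 0
        · rw [Finset.card_eq_zero.mp hc0]; exact hEmpty
        · by_cases hcm1 : (k.card : ℤ) = m + 1
          · have hkI : k = Itilde n m := by
              rw [hk_eq, Itilde, hcm1]; congr 1; ring
            rw [hkI]; exact hFull
          · have h1 : (1:ℤ) ≤ (k.card : ℤ) := by omega
            have h2 : (k.card : ℤ) ≤ m := by omega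
            have h3 := hNorm (n + k.card) (Finset.mem_Icc.mpr ⟨by omega, by omega⟩)
            have h4 : n + 1 + (k.card : ℤ) - 1 = n + (k.card : ℤ) := by ring
            rw [hk_eq, h4]; exact h3
      · -- inductive case
        have hd1 : 1 ≤ Nk (n+1) k := by
          have : 0 ≤ Nk (n+1) k := Nk_nonneg (n+1) k.card k rfl (fun x hx => (hksub x hx).1)
          omega
        have hne : k.Nonempty := by
          rcases Finset.eq_empty_or_nonempty k with h | h
          · exfalso; rw [h, Nk_empty] at hd1; omega
          · exact h
        set t := k.max' hne with hT
        have htk : t ∈ k := k.max'_mem hne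
        have htb := hksub t htk
        -- the first gap i
        have hS : ((Finset.Icc (n+1) t) \ k).Nonempty := by
          rw [Finset.sdiff_nonempty]
          intro hsub2
          have hkt : k = Finset.Icc (n+1) t :=
            Finset.Subset.antisymm
              (fun x hx => Finset.mem_Icc.mpr ⟨(hksub x hx).1, Finset.le_max' k x hx⟩) hsub2
          rw [hkt, Nk_Icc (n+1) t (by omega)] at hd1
          omega
        set i := ((Finset.Icc (n+1) t) \ k).min' hS with hI
        have hiS : i ∈ (Finset.Icc (n+1) t) \ k := Finset.min'_mem _ hS
        rw [Finset.mem_sdiff, Finset.mem_Icc] at hiS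
        obtain ⟨⟨hia, hit'⟩, hink⟩ := hiS
        have hit : i < t := lt_of_le_of_ne hit' (fun h => hink (by rw [h]; exact htk))
        have hlow : ∀ x, n+1 ≤ x → x ≤ i - 1 → x ∈ k := by
          intro x hx1 hx2
          by_contra hxk
          have hxS : x ∈ (Finset.Icc (n+1) t) \ k :=
            Finset.mem_sdiff.mpr ⟨Finset.mem_Icc.mpr ⟨hx1, by omega⟩, hxk⟩
          have := Finset.min'_le _ x hxS
          omega
        -- card bounds
        have hc1 : i ≤ n + (k.card : ℤ) := by
          have hsub1 : insert t (Finset.Icc (n+1) (i-1)) ⊆ k := by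
            intro x hx
            rcases Finset.mem_insert.mp hx with rfl | hx'
            · exact htk
            · have := Finset.mem_Icc.mp hx'
              exact hlow x this.1 this.2
          have hcard1 := Finset.card_le_card hsub1
          rw [Finset.card_insert_of_notMem (by simp only [Finset.mem_Icc]; omega),
            Int.card_Icc] at hcard1
          omega
        have hct : n + 1 + (k.card : ℤ) ≤ t := by
          have hsub2 : k ⊆ (Finset.Icc (n+1) t).erase i := by
            intro x hx
            refine Finset.mem_erase.mpr ⟨fun h => hink (by rw [← h]; exact hx), ?_⟩
            exact Finset.mem_Icc.mpr ⟨(hksub x hx).1, Finset.le_max' k x hx⟩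
          have hcard2 := Finset.card_le_card hsub2
          rw [Finset.card_erase_of_mem (Finset.mem_Icc.mpr ⟨hia, hit'⟩), Int.card_Icc] at hcard2
          omega
        -- memberships in Itilde
        have hiI : i ∈ Itilde n m := by rw [Itilde, Finset.mem_Icc]; omega
        have htI : t ∈ Itilde n m := hk htk
        have hsubE : k.erase t ⊆ Itilde n m := (Finset.erase_subset t k).trans hk
        have hce : ((k.erase t).card : ℤ) = (k.card : ℤ) - 1 := by
          have := Finset.card_erase_of_mem htk
          have h3 : 1 ≤ k.card := Finset.card_pos.mpr hne
          omega
        have hinotE : i ∉ k.erase t := fun h => hink (Finset.mem_of_mem_erase h)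
        -- IH in convenient form
        have IH0 : ∀ k', k' ⊆ Itilde n m → Nk (n+1) k' ≤ Nk (n+1) k - 1 → M k' = 0 := by
          intro k' h1 h2
          have hnn' : 0 ≤ Nk (n+1) k' := Nk_nonneg (n+1) k'.card k' rfl
            (fun x hx => by
              have := h1 hx
              rw [Itilde, Finset.mem_Icc] at this
              exact this.1)
          exact IH (Nk (n+1) k').toNat (by omega) k' h1 (by omega)
        -- Nk computations
        have E1 : Nk (n+1) (k.erase t) = Nk (n+1) k - t + (n + 1 + (k.card : ℤ) - 1) :=
          Nk_erase (n+1) t k htk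
        have N1 : Nk (n+1) (insert i (k.erase t)) = Nk (n+1) k + i - t := by
          rw [Nk_insert (n+1) i (k.erase t) hinotE, E1, hce]; ring
        have N2 : Nk (n+1) (insert i k) = Nk (n+1) k + i - (n + 1 + (k.card : ℤ)) := by
          rw [Nk_insert (n+1) i k hink]
        -- zero values
        have Z1 : M (insert i (k.erase t)) = 0 :=
          IH0 _ (Finset.insert_subset hiI hsubE) (by rw [N1]; omega)
        have Z2 : M (insert i k) = 0 :=
          IH0 _ (Finset.insert_subset hiI hk) (by rw [N2]; omega)
        have Z3 : M (k.erase t) = 0 := IH0 _ hsubE (by rw [E1]; omega)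
        -- nonpositivity via BZ1
        have hMle : M k ≤ 0 := by
          have hB1 := hBZ1 i t (k.erase t) hiI htI (by omega) hsubE hinotE
            (Finset.notMem_erase t k)
          rw [Finset.insert_erase htk, Z1, Z2, Z3] at hB1
          linarith
        -- nonnegativity
        by_cases hi1 : i + 1 ∈ k
        · by_cases hti : t = i + 1
          · -- k is exactly the hz set
            have hkeq : k = insert (i+1) (Finset.Icc (n+1) (i-1)) := by
              apply Finset.Subset.antisymm
              · intro x hx
                have hb := hksub x hx
                have hxt : x ≤ t := Finset.le_max' k x hx
                have hxi : x ≠ i := fun h => hink (by rw [← h]; exact hx)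
                rw [Finset.mem_insert, Finset.mem_Icc]
                omega
              · intro x hx
                rcases Finset.mem_insert.mp hx with rfl | hx'
                · rw [← hti]; exact htk
                · have := Finset.mem_Icc.mp hx'
                  exact hlow x this.1 this.2
            rw [hkeq]
            exact hz i (Finset.mem_Icc.mpr ⟨by omega, by omega⟩)
          · -- t ≥ i + 2, use BZ2 with A = (k.erase t).erase (i+1)
            have ht2 : i + 2 ≤ t := by omega
            have hi1I : i + 1 ∈ Itilde n m := by rw [Itilde, Finset.mem_Icc]; omega
            have hi1e : i + 1 ∈ k.erase t := Finset.mem_erase.mpr ⟨by omega, hi1⟩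
            have hAsub : (k.erase t).erase (i+1) ⊆ Itilde n m :=
              (Finset.erase_subset _ _).trans hsubE
            have hinA : i ∉ (k.erase t).erase (i+1) :=
              fun h => hinotE (Finset.mem_of_mem_erase h)
            have hi1nA : i + 1 ∉ (k.erase t).erase (i+1) := Finset.notMem_erase _ _
            have htnA : t ∉ (k.erase t).erase (i+1) :=
              fun h => (Finset.notMem_erase t k) (Finset.mem_of_mem_erase h)
            have hcA : (((k.erase t).erase (i+1)).card : ℤ) = (k.card : ℤ) - 2 := by
              have h1 := Finset.card_erase_of_mem hi1e
              have h2 := Finset.card_erase_of_mem htk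
              have h3 : 1 ≤ (k.erase t).card := Finset.card_pos.mpr ⟨i+1, hi1e⟩
              omega
            have eA1 : insert (i+1) ((k.erase t).erase (i+1)) = k.erase t :=
              Finset.insert_erase hi1e
            have NA : Nk (n+1) ((k.erase t).erase (i+1))
                = Nk (n+1) k - t - (i+1) + 2*(n + (k.card : ℤ)) - 1 := by
              rw [Nk_erase (n+1) (i+1) (k.erase t) hi1e, E1, hce]; ring
            have NiA : Nk (n+1) (insert i ((k.erase t).erase (i+1)))
                = Nk (n+1) k - t + (n + (k.card : ℤ)) - 1 := by
              rw [Nk_insert (n+1) i _ hinA, NA, hcA]; ring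
            have hB2 := hBZ2 i (i+1) t ((k.erase t).erase (i+1)) hiI hi1I htI
              (by omega) (by omega) hAsub hinA hi1nA htnA
            rw [eA1] at hB2
            have eA2 : insert (i+1) (insert t ((k.erase t).erase (i+1))) = k := by
              rw [Finset.insert_comm, eA1, Finset.insert_erase htk]
            rw [eA2] at hB2
            -- compute Nk of insert i (insert t A)
            have hiTA : i ∉ insert t ((k.erase t).erase (i+1)) := by
              intro h
              rcases Finset.mem_insert.mp h with h | h
              · omega
              · exact hinA h
            have hcTA : ((insert t ((k.erase t).erase (i+1))).card : ℤ) = (k.card : ℤ) - 1 := by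
              rw [Finset.card_insert_of_notMem htnA]
              omega
            have NtA : Nk (n+1) (insert t ((k.erase t).erase (i+1)))
                = Nk (n+1) k - (i+1) + (n + (k.card : ℤ)) := by
              rw [Nk_insert (n+1) t _ htnA, NA, hcA]; ring
            have NitA : Nk (n+1) (insert i (insert t ((k.erase t).erase (i+1))))
                = Nk (n+1) k - 1 := by
              rw [Nk_insert (n+1) i _ hiTA, NtA, hcTA]; ring
            have ZA1 : M (insert i (insert t ((k.erase t).erase (i+1)))) = 0 :=
              IH0 _ (Finset.insert_subset hiI (Finset.insert_subset htI hAsub))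
                (by rw [NitA])
            have ZA2 : M (insert i ((k.erase t).erase (i+1))) = 0 :=
              IH0 _ (Finset.insert_subset hiI hAsub) (by rw [NiA]; omega)
            rw [ZA1, Z3, Z1, ZA2] at hB2
            simp only [zero_add, add_zero] at hB2
            have hge : 0 ≤ M k := hB2.le.trans (min_le_right _ _)
            omega
        · -- i + 1 ∉ k, use BZ2 with A = k.erase t
          have ht2 : i + 2 ≤ t := by
            have : t ≠ i + 1 := fun h => hi1 (h ▸ htk)
            omega
          have hi1I : i + 1 ∈ Itilde n m := by rw [Itilde, Finset.mem_Icc]; omega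
          have hi1nE : i + 1 ∉ k.erase t := fun h => hi1 (Finset.mem_of_mem_erase h)
          have hB2 := hBZ2 i (i+1) t (k.erase t) hiI hi1I htI
            (by omega) (by omega) hsubE hinotE hi1nE (Finset.notMem_erase t k)
          rw [Finset.insert_erase htk] at hB2
          -- hB2 : M (insert i k) + M (insert (i+1) (k.erase t)) =
          --   min (M (insert i (insert (i+1) (k.erase t))) + M k)
          --       (M (insert (i+1) k) + M (insert i (k.erase t)))
          have N3 : Nk (n+1) (insert (i+1) (k.erase t)) = Nk (n+1) k + (i+1) - t := by
            rw [Nk_insert (n+1) (i+1) (k.erase t) hi1nE, E1, hce]; ring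
          have Z4 : M (insert (i+1) (k.erase t)) = 0 :=
            IH0 _ (Finset.insert_subset hi1I hsubE) (by rw [N3]; omega)
          have hi1E2 : i ∉ insert (i+1) (k.erase t) := by
            intro h
            rcases Finset.mem_insert.mp h with h | h
            · omega
            · exact hinotE h
          have hc2 : ((insert (i+1) (k.erase t)).card : ℤ) = (k.card : ℤ) := by
            rw [Finset.card_insert_of_notMem hi1nE]
            omega
          have N4 : Nk (n+1) (insert i (insert (i+1) (k.erase t)))
              = Nk (n+1) k + (i+1) - t + i - (n + 1 + (k.card : ℤ)) := by
            rw [Nk_insert (n+1) i _ hi1E2, N3, hc2]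
          have Z5 : M (insert i (insert (i+1) (k.erase t))) = 0 :=
            IH0 _ (Finset.insert_subset hiI (Finset.insert_subset hi1I hsubE))
              (by rw [N4]; omega)
          rw [Z2, Z4, Z5] at hB2
          simp only [zero_add, add_zero] at hB2
          have hge : 0 ≤ M k := hB2.le.trans (min_le_left _ _)
          omega
  intro k hk
  have hnn : 0 ≤ Nk (n+1) k := Nk_nonneg (n+1) k.card k rfl
    (fun x hx => by
      have := hk hx
      rw [Itilde, Finset.mem_Icc] at this
      exact this.1)
  exact key (Nk (n+1) k).toNat k hk (by omega)
end

section
/- Let I = [n+1, n+m] be a finite interval in ℤ and let K = [n'+1, n'+m'] be a subinterval of I. For an e-BZ datum M on I, define M_K by (M_K)_m := M_{[n+1,n'] ∪ m} for each Maya diagram m ⊆ K̃ = [n'+1, n'+m'+1] (with [n+1,n'] empty if n' = n). Then M_K is an e-BZ datum associated to K. -/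
/-- The restriction of an e-BZ datum on I = [n+1,n+m] to a subinterval K = [n'+1,n'+m']
is an e-BZ datum on K. -/
theorem stmt10 (n m n' m' : ℤ) (hm : 0 < m) (hm' : 0 < m')
    (h1 : n ≤ n') (h2 : n' + m' ≤ n + m) (M : Finset ℤ → ℤ) (hM : eBZ n m M) :
    eBZ n' m' (fun k => M (Finset.Icc (n + 1) n' ∪ k)) := by
  obtain ⟨h0, hI, hb1, hb2, hnorm⟩ := hM
  have hmemI : ∀ i ∈ Itilde n' m', i ∈ Itilde n m := by
    intro i hi; simp only [Itilde, Finset.mem_Icc] at hi ⊢; omega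
  have hsub : ∀ k : Finset ℤ, k ⊆ Itilde n' m' →
      Finset.Icc (n + 1) n' ∪ k ⊆ Itilde n m := by
    intro k hk x hx
    rcases Finset.mem_union.mp hx with h | h
    · simp only [Finset.mem_Icc] at h
      simp only [Itilde, Finset.mem_Icc]; omega
    · exact hmemI x (hk h)
  have hnot : ∀ (i : ℤ) (k : Finset ℤ), i ∈ Itilde n' m' → i ∉ k →
      i ∉ Finset.Icc (n + 1) n' ∪ k := by
    intro i k hi hik
    simp only [Itilde, Finset.mem_Icc] at hi
    simp only [Finset.mem_union, Finset.mem_Icc]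
    intro h; rcases h with h | h
    · omega
    · exact hik h
  refine ⟨?_, ?_, ?_, ?_, ?_⟩
  · show M (Finset.Icc (n + 1) n' ∪ ∅) = 0
    rw [Finset.union_empty]
    rcases eq_or_lt_of_le h1 with h | h
    · rw [show Finset.Icc (n + 1) n' = (∅ : Finset ℤ) from Finset.Icc_eq_empty (by omega)]
      exact h0
    · exact hnorm n' (Finset.mem_Icc.mpr ⟨by omega, by omega⟩)
  · show M (Finset.Icc (n + 1) n' ∪ Itilde n' m') = 0
    have he : Finset.Icc (n + 1) n' ∪ Itilde n' m' = Finset.Icc (n + 1) (n' + m' + 1) := by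
      ext x
      simp only [Itilde, Finset.mem_union, Finset.mem_Icc]
      omega
    rw [he]
    rcases eq_or_lt_of_le h2 with h | h
    · rw [show (n' + m' + 1 : ℤ) = n + m + 1 by omega]
      exact hI
    · exact hnorm (n' + m' + 1) (Finset.mem_Icc.mpr ⟨by omega, by omega⟩)
  · intro i j k hi hj hij hk hik hjk
    have := hb1 i j (Finset.Icc (n + 1) n' ∪ k) (hmemI i hi) (hmemI j hj) hij
      (hsub k hk) (hnot i k hi hik) (hnot j k hj hjk)
    simpa only [Finset.union_insert] using this
  · intro i j l k hi hj hl hij hjl hk hik hjk hlk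
    have := hb2 i j l (Finset.Icc (n + 1) n' ∪ k) (hmemI i hi) (hmemI j hj) (hmemI l hl)
      hij hjl (hsub k hk) (hnot i k hi hik) (hnot j k hj hjk) (hnot l k hl hlk)
    simpa only [Finset.union_insert] using this
  · intro i hi
    simp only [Finset.mem_Icc] at hi
    show M (Finset.Icc (n + 1) n' ∪ Finset.Icc (n' + 1) i) = 0
    have he : Finset.Icc (n + 1) n' ∪ Finset.Icc (n' + 1) i = Finset.Icc (n + 1) i := by
      ext x
      simp only [Finset.mem_union, Finset.mem_Icc]
      omega
    rw [he]
    exact hnorm i (Finset.mem_Icc.mpr ⟨by omega, by omega⟩)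
end

section
/- Let M be an e-BZ datum of type A associated to ℤ: a collection of nonpositive-normalized integers M_k indexed by all Maya diagrams k ⊆ ℤ (of arbitrary charge), such that for every finite interval K the restriction M_K is an e-BZ datum on K, and a stabilization condition (2-b) holds. Suppose M_{k(σ_p Λ_p)} = 0 for every p ∈ ℤ, where k(σ_p Λ_p) = ℤ_{≤ p−1} ∪ {p+1}. Then M_k = 0 for every Maya diagram k ⊆ ℤ. -/
/-- Restriction of a collection indexed by Maya diagrams of ℤ to a finite interval
K = [a+1, a+b]: k' ↦ M(ℤ_{≤a} ∪ k'). -/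
def restrictZ (M : Set ℤ → ℤ) (a : ℤ) : Finset ℤ → ℤ :=
  fun k => M ({x : ℤ | x ≤ a} ∪ ↑k)

/-- k is a Maya diagram of ℤ (of some charge). -/
def MayaZ (k : Set ℤ) : Prop :=
  ∃ r : ℤ, ∃ p q : ℕ, {x : ℤ | x ≤ r - p} ⊆ k ∧ k ⊆ {x : ℤ | x ≤ r + q} ∧
    (k ∩ {x : ℤ | r - p < x}).ncard = p

/-- k ∈ ℳ_ℤ(I) for I = [n+1, n+m]. -/
def InMZ (n m : ℤ) (k : Set ℤ) : Prop :=
  {x : ℤ | x ≤ n} ⊆ k ∧ k ⊆ {x : ℤ | x ≤ n + m + 1} ∧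
    (k ∩ Set.Icc (n + 1) (n + m + 1)).Nonempty ∧ ¬ Set.Icc (n + 1) (n + m + 1) ⊆ k

/-- Ω_I(k) = ℤ_{≤n} ∪ (Ĩ ∖ k). -/
def OmS (n m : ℤ) (k : Set ℤ) : Set ℤ :=
  {x : ℤ | x ≤ n} ∪ (Set.Icc (n + 1) (n + m + 1) \ k)

section Aux
variable {M : Set ℤ → ℤ}

private lemma mem_Itilde {n m x : ℤ} : x ∈ Itilde n m ↔ n + 1 ≤ x ∧ x ≤ n + m + 1 := by
  simp [Itilde]

private lemma fill (a b : ℤ) (hb : 0 < b) (N : Finset ℤ → ℤ) (hN : eBZ a b N) :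
    ∀ (n : ℕ) (k : Finset ℤ), k.card ≤ n → k ⊆ Itilde a b → ∀ i, i ∈ Itilde a b → i ∉ k →
      Finset.Icc (a+1) (i-1) ⊆ k → N k ≤ N (insert i k) := by
  intro n
  induction n with
  | zero =>
    intro k hcard hsub i hi hik hpre
    -- k = ∅ and also Icc (a+1) (i-1) = ∅, so i = a+1
    have hk : k = ∅ := Finset.card_eq_zero.mp (Nat.le_zero.mp hcard)
    subst hk
    have hia : i = a + 1 := by
      rcases mem_Itilde.mp hi with ⟨h1, h2⟩
      by_contra h
      have : a + 1 ∈ Finset.Icc (a+1) (i-1) := by simp [Finset.mem_Icc]; omega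
      simpa using hpre this
    have h1 : insert i (∅ : Finset ℤ) = Finset.Icc (a+1) (a+1) := by
      subst hia; ext x; simp [Finset.mem_Icc] <;> omega
    rw [h1, hN.1, hN.2.2.2.2 (a+1) (by simp [Finset.mem_Icc]; omega)]
  | succ n IH =>
    intro k hcard hsub i hi hik hpre
    by_cases hne : (k.filter (fun x => i < x)).Nonempty
    · obtain ⟨j, hj⟩ := hne
      rw [Finset.mem_filter] at hj
      obtain ⟨hjk, hij⟩ := hj
      have hbz1 := hN.2.2.1 i j (k.erase j) hi (hsub hjk) (by omega)
        (fun x hx => hsub (Finset.mem_of_mem_erase hx))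
        (fun h => hik (Finset.mem_of_mem_erase h))
        (Finset.notMem_erase j k)
      rw [Finset.insert_erase hjk] at hbz1
      have hbase : N (k.erase j) ≤ N (insert i (k.erase j)) := by
        apply IH (k.erase j) (by have := Finset.card_erase_lt_of_mem hjk; omega)
          (fun x hx => hsub (Finset.mem_of_mem_erase hx)) i hi
          (fun h => hik (Finset.mem_of_mem_erase h))
        intro x hx
        rcases Finset.mem_Icc.mp hx with ⟨h1, h2⟩
        exact Finset.mem_erase.mpr ⟨by omega, hpre hx⟩
      linarith
    · -- no element above i: k = Icc (a+1) (i-1)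
      have hk : k = Finset.Icc (a+1) (i-1) := by
        ext x
        simp only [Finset.mem_Icc]
        constructor
        · intro hx
          have h1 := mem_Itilde.mp (hsub hx)
          have h2 : ¬ i < x := fun h => hne ⟨x, Finset.mem_filter.mpr ⟨hx, h⟩⟩
          have h3 : x ≠ i := fun h => hik (h ▸ hx)
          omega
        · intro hx; exact hpre (Finset.mem_Icc.mpr hx)
      have hins : insert i k = Finset.Icc (a+1) i := by
        rw [hk]; ext x
        rcases mem_Itilde.mp hi with ⟨h1, h2⟩
        simp [Finset.mem_Icc]; omega
      have hz1 : N k = 0 := by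
        rcases mem_Itilde.mp hi with ⟨h1, h2⟩
        by_cases h : a + 1 ≤ i - 1
        · rw [hk]; exact hN.2.2.2.2 (i-1) (by simp [Finset.mem_Icc]; omega)
        · rw [hk]
          have : Finset.Icc (a+1) (i-1) = ∅ := by
            apply Finset.Icc_eq_empty; omega
          rw [this]; exact hN.1
      have hz2 : N (insert i k) = 0 := by
        rcases mem_Itilde.mp hi with ⟨h1, h2⟩
        rw [hins]
        by_cases h : i ≤ a + b
        · exact hN.2.2.2.2 i (by simp [Finset.mem_Icc]; omega)
        · have : i = a + b + 1 := by omega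
          subst this
          exact hN.2.1
      rw [hz1, hz2]

private lemma npos (a b : ℤ) (hb : 0 < b) (N : Finset ℤ → ℤ) (hN : eBZ a b N) :
    ∀ (n : ℕ) (k : Finset ℤ), (Itilde a b \ k).card ≤ n → k ⊆ Itilde a b → N k ≤ 0 := by
  intro n
  induction n with
  | zero =>
    intro k hcard hsub
    have h : Itilde a b \ k = ∅ := Finset.card_eq_zero.mp (Nat.le_zero.mp hcard)
    have : k = Itilde a b := Finset.Subset.antisymm hsub (fun x hx => by
      by_contra hxk
      have : x ∈ Itilde a b \ k := Finset.mem_sdiff.mpr ⟨hx, hxk⟩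
      simp [h] at this)
    rw [this, hN.2.1]
  | succ n IH =>
    intro k hcard hsub
    by_cases hne : (Itilde a b \ k).Nonempty
    · set i := (Itilde a b \ k).min' hne with hidef
      have hiI : i ∈ Itilde a b \ k := Finset.min'_mem _ hne
      rw [Finset.mem_sdiff] at hiI
      have hf : N k ≤ N (insert i k) := by
        apply fill a b hb N hN k.card k le_rfl hsub i hiI.1 hiI.2
        intro x hx
        rcases Finset.mem_Icc.mp hx with ⟨h1, h2⟩
        by_contra hxk
        have hxi : x ∈ Itilde a b \ k := by
          rw [Finset.mem_sdiff]
          refine ⟨mem_Itilde.mpr ⟨h1, ?_⟩, hxk⟩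
          rcases mem_Itilde.mp hiI.1 with ⟨g1, g2⟩; omega
        have := Finset.min'_le _ x hxi
        omega
      have hrec : N (insert i k) ≤ 0 := by
        apply IH
        · have heq : Itilde a b \ insert i k = (Itilde a b \ k).erase i := by
            ext x; simp [Finset.mem_sdiff, Finset.mem_erase]; tauto
          rw [heq]
          have := Finset.card_erase_lt_of_mem (Finset.mem_sdiff.mpr hiI)
          omega
        · exact Finset.insert_subset hiI.1 hsub
      linarith
    · have h : Itilde a b \ k = ∅ := Finset.not_nonempty_iff_eq_empty.mp hne
      have : k = Itilde a b := Finset.Subset.antisymm hsub (fun x hx => by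
        by_contra hxk
        have : x ∈ Itilde a b \ k := Finset.mem_sdiff.mpr ⟨hx, hxk⟩
        simp [h] at this)
      rw [this, hN.2.1]

variable {M : Set ℤ → ℤ}

private lemma Mdown (hres : ∀ a b : ℤ, 0 < b → eBZ a b (restrictZ M a)) (j : ℤ) :
    M {x | x ≤ j} = 0 := by
  have h := (hres j 1 one_pos).1
  have : restrictZ M j ∅ = M {x | x ≤ j} := by
    unfold restrictZ; congr 1; simp
  rw [this] at h; exact h

private lemma nposM (hres : ∀ a b : ℤ, 0 < b → eBZ a b (restrictZ M a)) :
    ∀ (a : ℤ) (F : Finset ℤ), (∀ x ∈ F, a + 1 ≤ x) →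
    M ({x | x ≤ a} ∪ ↑F) ≤ 0 := by
  intro a F hF
  rcases F.eq_empty_or_nonempty with h | h
  · subst h
    simp only [Finset.coe_empty, Set.union_empty]
    rw [Mdown hres]
  · set s := F.max' h with hs
    have hsF : s ∈ F := F.max'_mem h
    have hsa : a + 1 ≤ s := hF s hsF
    have hb : (0:ℤ) < s - a := by omega
    have hsub : F ⊆ Itilde a (s - a) := by
      intro x hx
      refine mem_Itilde.mpr ⟨hF x hx, ?_⟩
      have := F.le_max' x hx
      omega
    exact npos a (s-a) hb (restrictZ M a) (hres a (s-a) hb) (Itilde a (s-a) \ F).card F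
      le_rfl hsub


private def wg (a : ℤ) (F : Finset ℤ) : ℕ := ∑ x ∈ F, (x - a - 1).toNat

private lemma main (hres : ∀ a b : ℤ, 0 < b → eBZ a b (restrictZ M a))
    (heps : ∀ p : ℤ, M ({x : ℤ | x ≤ p - 1} ∪ {p + 1}) = 0) :
    ∀ (n : ℕ) (a : ℤ) (F : Finset ℤ), (∀ x ∈ F, a + 1 ≤ x) → wg a F ≤ n →
      M ({x | x ≤ a} ∪ ↑F) = 0 := by
  intro n
  induction n using Nat.strong_induction_on with
  | _ n IH =>
  intro a F hF hwg
  rcases F.eq_empty_or_nonempty with hemp | hne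
  · subst hemp
    simp only [Finset.coe_empty, Set.union_empty]
    exact Mdown hres a
  by_cases ha1 : a + 1 ∈ F
  · -- absorb a+1 into the tail
    set F' := F.erase (a+1) with hF'
    rcases F'.eq_empty_or_nonempty with h' | h'
    · have hFs : F = {a+1} := by
        ext x
        simp only [Finset.mem_singleton]
        constructor
        · intro hx
          by_contra hxe
          have : x ∈ F' := Finset.mem_erase.mpr ⟨hxe, hx⟩
          simp [h'] at this
        · intro hx; subst hx; exact ha1
      rw [hFs]
      have e : ({x : ℤ | x ≤ a} ∪ ↑({a+1} : Finset ℤ) : Set ℤ) = {x : ℤ | x ≤ a + 1} := by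
        ext x; simp; omega
      rw [e]; exact Mdown hres (a+1)
    · have hset : ({x : ℤ | x ≤ a} ∪ ↑F : Set ℤ) = {x : ℤ | x ≤ a + 1} ∪ ↑F' := by
        ext x
        by_cases hx : x ∈ F
        · have := hF x hx
          simp [hF', hx] <;> omega
        · have hxne : x ≠ a + 1 := fun h => hx (h ▸ ha1)
          simp [hF', hx] <;> omega
      have hlt : wg (a+1) F' < wg a F := by
        have h1 : wg a F = (a + 1 - a - 1).toNat + wg a F' := by
          unfold wg; rw [← Finset.add_sum_erase F _ ha1]
        have h2 : wg (a+1) F' < wg a F' := by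
          unfold wg
          apply Finset.sum_lt_sum_of_nonempty h'
          intro x hx
          have hx1 := hF x (Finset.mem_of_mem_erase hx)
          have hx2 : x ≠ a + 1 := (Finset.mem_erase.mp hx).1
          omega
        omega
      rw [hset]
      exact IH (wg (a+1) F') (by omega) (a+1) F'
        (fun x hx => by
          have hx1 := hF x (Finset.mem_of_mem_erase hx)
          have hx2 : x ≠ a + 1 := (Finset.mem_erase.mp hx).1
          omega) le_rfl
  · -- a+1 ∉ F, F nonempty
    set s := F.max' hne with hsdef
    have hsF : s ∈ F := F.max'_mem hne
    have hs1 : a + 1 ≤ s := hF s hsF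
    have hs2 : a + 2 ≤ s := by
      rcases eq_or_lt_of_le hs1 with h | h
      · exact absurd (h ▸ hsF) ha1
      · omega
    set F' := F.erase s with hF'def
    rcases F'.eq_empty_or_nonempty with h' | h'
    · -- F = {s}
      have hFs : F = {s} := by
        ext x
        simp only [Finset.mem_singleton]
        constructor
        · intro hx
          by_contra hxe
          have : x ∈ F' := Finset.mem_erase.mpr ⟨hxe, hx⟩
          simp [h'] at this
        · intro hx; subst hx; exact hsF
      rcases eq_or_lt_of_le hs2 with hcase | hcase
      · -- s = a+2 : the ε-hypothesis
        rw [hFs, ← hcase]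
        have e : ({x : ℤ | x ≤ a} ∪ ↑({a+2} : Finset ℤ) : Set ℤ)
            = {x : ℤ | x ≤ (a+1) - 1} ∪ {(a+1) + 1} := by
          ext x; simp; omega
        rw [show ((a:ℤ)+2) = (a+1)+1 by ring] at e ⊢
        rw [e]
        exact heps (a+1)
      · -- s ≥ a+3 : Plücker step for singletons
        have hs3 : a + 3 ≤ s := by omega
        have hb : (0:ℤ) < s - a + 1 := by omega
        have hBZ := (hres (a-1) (s-a+1) hb).2.2.2.1
        have memI : ∀ x : ℤ, a ≤ x → x ≤ s + 1 → x ∈ Itilde (a-1) (s-a+1) := by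
          intro x h1 h2; exact mem_Itilde.mpr ⟨by omega, by omega⟩
        have E := hBZ (a+1) (a+2) s ({a} : Finset ℤ)
          (memI _ (by omega) (by omega)) (memI _ (by omega) (by omega))
          (memI _ (by omega) (by omega)) (by omega) (by omega)
          (fun x hx => by
            rw [Finset.mem_singleton] at hx; subst hx
            exact memI _ le_rfl (by omega))
          (by simp) (by simp) (by simp; omega)
        simp only [restrictZ] at E
        have sA : ({x : ℤ | x ≤ a - 1} ∪ ↑(insert (a+1) (insert s ({a} : Finset ℤ))) : Set ℤ)
            = {x : ℤ | x ≤ a + 1} ∪ ↑({s} : Finset ℤ) := by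
          ext x; simp <;> omega
        have sB : ({x : ℤ | x ≤ a - 1} ∪ ↑(insert (a+2) ({a} : Finset ℤ)) : Set ℤ)
            = {x : ℤ | x ≤ (a+1) - 1} ∪ {(a+1) + 1} := by
          ext x; simp <;> omega
        have sC : ({x : ℤ | x ≤ a - 1} ∪ ↑(insert (a+1) (insert (a+2) ({a} : Finset ℤ))) : Set ℤ)
            = {x : ℤ | x ≤ a + 2} := by
          ext x; simp <;> omega
        have sD : ({x : ℤ | x ≤ a - 1} ∪ ↑(insert s ({a} : Finset ℤ)) : Set ℤ)
            = {x : ℤ | x ≤ a} ∪ ↑({s} : Finset ℤ) := by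
          ext x; simp <;> omega
        have sE : ({x : ℤ | x ≤ a - 1} ∪ ↑(insert (a+1) ({a} : Finset ℤ)) : Set ℤ)
            = {x : ℤ | x ≤ a + 1} := by
          ext x; simp <;> omega
        rw [sA, sB, sC, sD, sE] at E
        have vA : M ({x : ℤ | x ≤ a + 1} ∪ ↑({s} : Finset ℤ)) = 0 := by
          have hwgF : wg a F = (s - a - 1).toNat := by rw [hFs]; simp [wg]
          have hwgs : wg (a+1) ({s} : Finset ℤ) = (s - a - 2).toNat := by
            simp [wg]; omega
          apply IH (wg (a+1) ({s} : Finset ℤ)) (by omega) (a+1) {s}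
            (fun x hx => by rw [Finset.mem_singleton] at hx; omega) le_rfl
        have vB : M ({x : ℤ | x ≤ (a+1) - 1} ∪ {(a+1) + 1}) = 0 := heps (a+1)
        have vC : M ({x : ℤ | x ≤ a + 2}) = 0 := Mdown hres (a+2)
        have vE : M ({x : ℤ | x ≤ a + 1}) = 0 := Mdown hres (a+1)
        rw [vA, vB, vC, vE] at E
        have hT : M ({x : ℤ | x ≤ a} ∪ ↑({s} : Finset ℤ)) ≤ 0 :=
          nposM hres a {s} (fun x hx => by rw [Finset.mem_singleton] at hx; omega)
        rw [hFs]
        have hmin := min_le_left (0 + M ({x : ℤ | x ≤ a} ∪ ↑({s} : Finset ℤ)))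
          (M ({x : ℤ | x ≤ a - 1} ∪ ↑(insert (a+2) (insert s ({a} : Finset ℤ)))) + 0)
        rw [← E] at hmin
        omega
    · -- |F| ≥ 2 : general Plücker step
      set j := F'.max' h' with hjdef
      have hjF' : j ∈ F' := F'.max'_mem h'
      have hjF : j ∈ F := Finset.mem_of_mem_erase hjF'
      have hjs : j ≠ s := (Finset.mem_erase.mp hjF').1
      have hjlt : j < s := lt_of_le_of_ne (F.le_max' j hjF) hjs
      have hja : a + 2 ≤ j := by
        have h1 := hF j hjF
        rcases eq_or_lt_of_le h1 with h | h
        · exact absurd (h ▸ hjF) ha1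
        · omega
      have hs3 : a + 3 ≤ s := by omega
      set G := F'.erase j with hGdef
      have hjG : j ∉ G := Finset.notMem_erase _ _
      have hsG : s ∉ G := fun h => (Finset.mem_erase.mp (Finset.mem_of_mem_erase h)).1 rfl
      have hGbound : ∀ x ∈ G, a + 2 ≤ x ∧ x < j := by
        intro x hx
        have hx1 : x ∈ F' := Finset.mem_of_mem_erase hx
        have hx2 : x ∈ F := Finset.mem_of_mem_erase hx1
        have hx3 := hF x hx2
        have hx4 : x ≠ a + 1 := fun h => ha1 (h ▸ hx2)
        have hx5 : x ≠ j := (Finset.mem_erase.mp hx).1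
        have hx6 := F'.le_max' x hx1
        exact ⟨by omega, by omega⟩
      have ha1G : a + 1 ∉ G := fun h => by have := (hGbound _ h).1; omega
      have haG : a ∉ G := fun h => by have := (hGbound _ h).1; omega
      have hFeq : F = insert s (insert j G) := by
        rw [hGdef, Finset.insert_erase hjF', hF'def, Finset.insert_erase hsF]
      have hb : (0:ℤ) < s - a + 1 := by omega
      have hBZ := (hres (a-1) (s-a+1) hb).2.2.2.1
      have memI : ∀ x : ℤ, a ≤ x → x ≤ s + 1 → x ∈ Itilde (a-1) (s-a+1) := by
        intro x h1 h2; exact mem_Itilde.mpr ⟨by omega, by omega⟩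
      have hk0sub : insert a G ⊆ Itilde (a-1) (s-a+1) := by
        intro x hx
        rcases Finset.mem_insert.mp hx with h | h
        · exact memI _ (by omega) (by omega)
        · have := hGbound _ h; exact memI _ (by omega) (by omega)
      have E := hBZ (a+1) j s (insert a G)
        (memI _ (by omega) (by omega)) (memI _ (by omega) (by omega))
        (memI _ (by omega) (by omega)) (by omega) hjlt hk0sub
        (fun h => by rcases Finset.mem_insert.mp h with h | h
                     · omega
                     · exact ha1G h)
        (fun h => by rcases Finset.mem_insert.mp h with h | h
                     · omega
                     · exact hjG h)
        (fun h => by rcases Finset.mem_insert.mp h with h | h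
                     · omega
                     · exact hsG h)
      simp only [restrictZ] at E
      have sA : ({x : ℤ | x ≤ a - 1} ∪ ↑(insert (a+1) (insert s (insert a G))) : Set ℤ)
          = {x : ℤ | x ≤ a} ∪ ↑(insert (a+1) (insert s G)) := by
        ext x
        by_cases hx : x ∈ G
        · have := hGbound _ hx; simp [hx] <;> omega
        · simp [hx] <;> omega
      have sB : ({x : ℤ | x ≤ a - 1} ∪ ↑(insert j (insert a G)) : Set ℤ)
          = {x : ℤ | x ≤ a} ∪ ↑(insert j G) := by
        ext x
        by_cases hx : x ∈ G
        · have := hGbound _ hx; simp [hx] <;> omega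
        · simp [hx] <;> omega
      have sC : ({x : ℤ | x ≤ a - 1} ∪ ↑(insert (a+1) (insert j (insert a G))) : Set ℤ)
          = {x : ℤ | x ≤ a} ∪ ↑(insert (a+1) (insert j G)) := by
        ext x
        by_cases hx : x ∈ G
        · have := hGbound _ hx; simp [hx] <;> omega
        · simp [hx] <;> omega
      have sD : ({x : ℤ | x ≤ a - 1} ∪ ↑(insert s (insert a G)) : Set ℤ)
          = {x : ℤ | x ≤ a} ∪ ↑(insert s G) := by
        ext x
        by_cases hx : x ∈ G
        · have := hGbound _ hx; simp [hx] <;> omega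
        · simp [hx] <;> omega
      have sT : ({x : ℤ | x ≤ a - 1} ∪ ↑(insert j (insert s (insert a G))) : Set ℤ)
          = {x : ℤ | x ≤ a} ∪ ↑(insert s (insert j G)) := by
        ext x
        by_cases hx : x ∈ G
        · have := hGbound _ hx; simp [hx] <;> omega
        · simp [hx] <;> omega
      have sE : ({x : ℤ | x ≤ a - 1} ∪ ↑(insert (a+1) (insert a G)) : Set ℤ)
          = {x : ℤ | x ≤ a + 1} ∪ ↑G := by
        ext x
        by_cases hx : x ∈ G
        · have := hGbound _ hx; simp [hx] <;> omega
        · simp [hx] <;> omega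
      rw [sA, sB, sC, sD, sT, sE] at E
      -- weight bookkeeping
      have hsnotin : s ∉ insert j G := fun h => by
        rcases Finset.mem_insert.mp h with h | h
        · exact hjs h.symm
        · exact hsG h
      have ha1notin : a + 1 ∉ insert s G := fun h => by
        rcases Finset.mem_insert.mp h with h | h
        · omega
        · exact ha1G h
      have ha1notinj : a + 1 ∉ insert j G := fun h => by
        rcases Finset.mem_insert.mp h with h | h
        · omega
        · exact ha1G h
      have hwF : wg a F = (s - a - 1).toNat + ((j - a - 1).toNat + wg a G) := by
        rw [hFeq]; unfold wg
        rw [Finset.sum_insert hsnotin, Finset.sum_insert hjG]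
      have hwA : wg a (insert (a+1) (insert s G))
          = (a + 1 - a - 1).toNat + ((s - a - 1).toNat + wg a G) := by
        unfold wg
        rw [Finset.sum_insert ha1notin, Finset.sum_insert hsG]
      have hwB : wg a (insert j G) = (j - a - 1).toNat + wg a G := by
        unfold wg; rw [Finset.sum_insert hjG]
      have hwC : wg a (insert (a+1) (insert j G))
          = (a + 1 - a - 1).toNat + ((j - a - 1).toNat + wg a G) := by
        unfold wg
        rw [Finset.sum_insert ha1notinj, Finset.sum_insert hjG]
      have hwD : wg a (insert s G) = (s - a - 1).toNat + wg a G := by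
        unfold wg; rw [Finset.sum_insert hsG]
      have hGge : ∀ x ∈ G, a + 1 ≤ x := fun x hx => by have := (hGbound _ hx).1; omega
      have vA : M ({x : ℤ | x ≤ a} ∪ ↑(insert (a+1) (insert s G))) = 0 := by
        apply IH (wg a (insert (a+1) (insert s G))) (by omega) a _
          (fun x hx => by
            rcases Finset.mem_insert.mp hx with h | h
            · omega
            · rcases Finset.mem_insert.mp h with h | h
              · omega
              · exact hGge _ h) le_rfl
      have vB : M ({x : ℤ | x ≤ a} ∪ ↑(insert j G)) = 0 := by
        apply IH (wg a (insert j G)) (by omega) a _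
          (fun x hx => by
            rcases Finset.mem_insert.mp hx with h | h
            · omega
            · exact hGge _ h) le_rfl
      have vC : M ({x : ℤ | x ≤ a} ∪ ↑(insert (a+1) (insert j G))) = 0 := by
        apply IH (wg a (insert (a+1) (insert j G))) (by omega) a _
          (fun x hx => by
            rcases Finset.mem_insert.mp hx with h | h
            · omega
            · rcases Finset.mem_insert.mp h with h | h
              · omega
              · exact hGge _ h) le_rfl
      have vD : M ({x : ℤ | x ≤ a} ∪ ↑(insert s G)) = 0 := by
        apply IH (wg a (insert s G)) (by omega) a _
          (fun x hx => by
            rcases Finset.mem_insert.mp hx with h | h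
            · omega
            · exact hGge _ h) le_rfl
      have vE : M ({x : ℤ | x ≤ a + 1} ∪ ↑G) ≤ 0 :=
        nposM hres (a+1) G (fun x hx => by have := (hGbound _ hx).1; omega)
      have vT : M ({x : ℤ | x ≤ a} ∪ ↑(insert s (insert j G))) ≤ 0 := by
        rw [← hFeq]; exact nposM hres a F hF
      rw [vA, vB, vC, vD] at E
      have hmin := min_le_right ((0:ℤ) + 0)
        (M ({x : ℤ | x ≤ a} ∪ ↑(insert s (insert j G))) + M ({x : ℤ | x ≤ a + 1} ∪ ↑G))
      rw [← E] at hmin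
      rw [hFeq]
      omega

end Aux

/-- For an e-BZ datum associated to ℤ (restricting to e-BZ data on all finite
intervals and satisfying the stabilization condition (2-b)): if the component at
k(σ_p Λ_p) = ℤ_{≤p−1} ∪ {p+1} vanishes for every p, then all components vanish. -/
theorem stmt15 (M : Set ℤ → ℤ)
    (hres : ∀ a b : ℤ, 0 < b → eBZ a b (restrictZ M a))
    (hstab : ∀ k, MayaZ k → ∃ n m : ℤ, 0 < m ∧ InMZ n m k ∧
      ∀ n' m' : ℤ, 0 < m' → n' ≤ n → n + m ≤ n' + m' →
        M (OmS n' m' k) = M (OmS n m k))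
    (heps : ∀ p : ℤ, M ({x : ℤ | x ≤ p - 1} ∪ {p + 1}) = 0) :
    ∀ k, MayaZ k → M k = 0 := by
  intro k hk
  classical
  obtain ⟨r, p, q, h1, h2, _h3⟩ := hk
  set a : ℤ := r - p with ha
  set F : Finset ℤ := (Finset.Icc (a+1) (r+q)).filter (fun x => x ∈ k) with hFdef
  have hkeq : k = {x : ℤ | x ≤ a} ∪ ↑F := by
    ext x
    simp only [Set.mem_union, Set.mem_setOf_eq, Finset.mem_coe, Finset.mem_filter,
      Finset.mem_Icc, hFdef]
    constructor
    · intro hx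
      by_cases hxa : x ≤ a
      · left; exact hxa
      · right
        have hxq : x ≤ r + q := h2 hx
        exact ⟨⟨by omega, hxq⟩, hx⟩
    · rintro (hx | ⟨_, hx⟩)
      · exact h1 hx
      · exact hx
  rw [hkeq]
  exact main hres heps (wg a F) a F
    (fun x hx => by
      have := (Finset.mem_filter.mp hx).1
      rw [Finset.mem_Icc] at this
      omega) le_rfl
end

section
/- Let B be a crystal for the quantized affine algebra U_q(ŝl_l) (with index set Î = {0,…,l−1}) and b_∞ ∈ B an element of weight 0. Assume: (1) wt(B) ⊆ Q̂⁻ (the negative root cone); (2) b_∞ is the unique element of weight 0; (3) ε_p(b_∞) = 0 for all p; (4) ε_p(b) ∈ ℤ for all p, b; (5) for each p there is a strict crystal embedding Ψ_p : B → B ⊗ B_p, where B_p = {b_p(n) : n ∈ ℤ} is the standard elementary crystal; (6) Ψ_p(B) ⊆ B ⊗ {f_p^n b_p : n ≥ 0}; (7) for every b ≠ b_∞ there exists p with Ψ_p(b) = b' ⊗ f_p^n b_p, n > 0. Then the crystal graph of B is connected: every element of B is obtained from b_∞ by a finite sequence of lowering operators f_p. -/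
/-- The Cartan matrix of type A_{l-1}^{(1)} with cyclic index set Î = Fin l. -/
def acartan (l : ℕ) (p q : Fin l) : ℤ :=
  if p = q then 2
  else if ((p : ℕ) + 1) % l = (q : ℕ) ∨ ((q : ℕ) + 1) % l = (p : ℕ) then -1 else 0

/-- A U_q(ŝl_l)-crystal: a set B with weight (recorded by its coefficients in the
simple roots), ε_p, φ_p, and Kashiwara operators e_p, f_p (with value `none` for 0),
satisfying the usual crystal axioms. -/
structure AffCrystal (l : ℕ) where
  B : Type
  wt : B → Fin l → ℤ
  eps : Fin l → B → ℤ
  phi : Fin l → B → ℤ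
  e : Fin l → B → Option B
  f : Fin l → B → Option B
  phi_eq : ∀ p b, phi p b = eps p b + ∑ q, acartan l p q * wt b q
  wt_e : ∀ p b b', e p b = some b' → ∀ q, wt b' q = wt b q + (if q = p then 1 else 0)
  wt_f : ∀ p b b', f p b = some b' → ∀ q, wt b' q = wt b q - (if q = p then 1 else 0)
  eps_e : ∀ p b b', e p b = some b' → eps p b' = eps p b - 1
  eps_f : ∀ p b b', f p b = some b' → eps p b' = eps p b + 1
  e_f : ∀ p b b', e p b = some b' ↔ f p b' = some b

/-- The raising Kashiwara operator on B ⊗ B_p, where an element b' ⊗ b_p(n) of the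
tensor product with the elementary crystal B_p is encoded as the pair (b', n);
recall ε_q(b_p(n)) = φ_q(b_p(n)) = −∞ for q ≠ p and ε_p(b_p(n)) = −n. -/
def tensorE (l : ℕ) (C : AffCrystal l) (p q : Fin l) (x : C.B × ℤ) : Option (C.B × ℤ) :=
  if q = p then
    (if -x.2 ≤ C.phi p x.1 then (C.e p x.1).map (fun b => (b, x.2))
     else some (x.1, x.2 + 1))
  else (C.e q x.1).map (fun b => (b, x.2))

/-- The lowering Kashiwara operator on B ⊗ B_p. -/
def tensorF (l : ℕ) (C : AffCrystal l) (p q : Fin l) (x : C.B × ℤ) : Option (C.B × ℤ) :=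
  if q = p then
    (if -x.2 < C.phi p x.1 then (C.f p x.1).map (fun b => (b, x.2))
     else some (x.1, x.2 - 1))
  else (C.f q x.1).map (fun b => (b, x.2))

/-- Ψ : B → B ⊗ B_p (with b' ⊗ b_p(n) encoded as (b', n)) is a strict embedding:
injective, weight-preserving, compatible with ε (via the tensor product rule), and
commuting with all Kashiwara operators e_q, f_q. -/
def StrictEmb (l : ℕ) (C : AffCrystal l) (p : Fin l) (Ψ : C.B → C.B × ℤ) : Prop :=
  Function.Injective Ψ ∧
  (∀ b q, C.wt b q = C.wt (Ψ b).1 q + (if q = p then (Ψ b).2 else 0)) ∧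
  (∀ b q, C.eps q b =
    (if q = p then
      max (C.eps p (Ψ b).1) (-(Ψ b).2 - ∑ r, acartan l p r * C.wt (Ψ b).1 r)
     else C.eps q (Ψ b).1)) ∧
  (∀ b q, (C.e q b).map Ψ = tensorE l C p q (Ψ b)) ∧
  (∀ b q, (C.f q b).map Ψ = tensorF l C p q (Ψ b))

/-- Kashiwara–Saito-type hypotheses imply connectedness of the crystal graph:
every element is reached from the weight-zero element b_∞ by lowering operators. -/
theorem stmt17 (l : ℕ) (hl : 3 ≤ l) (C : AffCrystal l) (binf : C.B)
    (h1 : ∀ b q, C.wt b q ≤ 0)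
    (hwt0 : ∀ q, C.wt binf q = 0)
    (h2 : ∀ b, (∀ q, C.wt b q = 0) → b = binf)
    (h3 : ∀ p, C.eps p binf = 0)
    (Ψ : Fin l → C.B → C.B × ℤ)
    (h5 : ∀ p, StrictEmb l C p (Ψ p))
    (h6 : ∀ p b, (Ψ p b).2 ≤ 0)
    (h7 : ∀ b, b ≠ binf → ∃ p, (Ψ p b).2 < 0) :
    ∀ b : C.B, ∃ L : List (Fin l),
      L.foldl (fun ob q => ob.bind (C.f q)) (some binf) = some b := by
  classical
  have hHnn : ∀ b : C.B, 0 ≤ ∑ q, -C.wt b q := by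
    intro b; apply Finset.sum_nonneg; intro q _; have := h1 b q; omega
  set Ht : C.B → ℕ := fun b => (∑ q, -C.wt b q).toNat with hHt
  have hHcast : ∀ b, (Ht b : ℤ) = ∑ q, -C.wt b q := by
    intro b; simp only [hHt]; exact Int.toNat_of_nonneg (hHnn b)
  have hH0 : ∀ b, Ht b = 0 → b = binf := by
    intro b hb
    apply h2
    intro q
    have h0 : (∑ r, -C.wt b r) = 0 := by rw [← hHcast b, hb]; simp
    have := (Finset.sum_eq_zero_iff_of_nonneg
      (by intro r _; have := h1 b r; omega)).mp h0 q (Finset.mem_univ q)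
    omega
  -- height decomposition under Ψ p
  have hdec : ∀ b p, ((Ht (Ψ p b).1 : ℤ)) = (Ht b : ℤ) + (Ψ p b).2 := by
    intro b p
    obtain ⟨hinj, hwt, heps, he, hf⟩ := h5 p
    have hsum : ∑ q, -C.wt (Ψ p b).1 q
        = ∑ q, (-C.wt b q + (if q = p then (Ψ p b).2 else 0)) := by
      apply Finset.sum_congr rfl
      intro q _
      have h := hwt b q
      by_cases hqp : q = p <;> simp [hqp] at h ⊢ <;> omega
    rw [hHcast, hHcast, hsum, Finset.sum_add_distrib]
    congr 1
    simp
  -- Claim R : positive eps means e is defined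
  have hR : ∀ N b, Ht b ≤ N → ∀ q, 0 < C.eps q b → ∃ c, C.e q b = some c := by
    intro N
    induction N with
    | zero =>
      intro b hb q hq
      rw [hH0 b (Nat.le_zero.mp hb), h3 q] at hq
      omega
    | succ N ih =>
      intro b hb q hq
      by_cases hbinf : b = binf
      · rw [hbinf, h3 q] at hq; omega
      obtain ⟨p, hp⟩ := h7 b hbinf
      obtain ⟨hinj, hwt, heps, he, hf⟩ := h5 p
      have hb' : Ht (Ψ p b).1 ≤ N := by
        have := hdec b p; omega
      have hεq := heps b q
      by_cases hqp : q = p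
      · subst hqp
        rw [if_pos rfl] at hεq
        have hTE := he b q
        by_cases hφ : -(Ψ q b).2 ≤ C.phi q (Ψ q b).1
        · have hφeq := C.phi_eq q (Ψ q b).1
          have hε' : 0 < C.eps q (Ψ q b).1 := by
            rw [hεq] at hq
            rcases lt_max_iff.mp hq with h | h
            · exact h
            · linarith
          obtain ⟨c, hc⟩ := ih (Ψ q b).1 hb' q hε'
          have hTE2 : tensorE l C q q (Ψ q b) = some (c, (Ψ q b).2) := by
            simp [tensorE, hφ, hc]
          rw [hTE2] at hTE
          obtain ⟨c', hc', -⟩ := Option.map_eq_some_iff.mp hTE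
          exact ⟨c', hc'⟩
        · have hTE2 : tensorE l C q q (Ψ q b) = some ((Ψ q b).1, (Ψ q b).2 + 1) := by
            simp [tensorE, hφ]
          rw [hTE2] at hTE
          obtain ⟨c', hc', -⟩ := Option.map_eq_some_iff.mp hTE
          exact ⟨c', hc'⟩
      · rw [if_neg hqp] at hεq
        have hε' : 0 < C.eps q (Ψ p b).1 := by omega
        obtain ⟨c, hc⟩ := ih (Ψ p b).1 hb' q hε'
        have hTE := he b q
        have hTE2 : tensorE l C p q (Ψ p b) = some (c, (Ψ p b).2) := by
          simp [tensorE, hqp, hc]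
        rw [hTE2] at hTE
        obtain ⟨c', hc', -⟩ := Option.map_eq_some_iff.mp hTE
        exact ⟨c', hc'⟩
  -- Claim Y : every non-highest element has a positive eps
  have hY : ∀ N b, Ht b ≤ N → b ≠ binf → ∃ q, 0 < C.eps q b := by
    intro N
    induction N with
    | zero =>
      intro b hb hbinf
      exact absurd (hH0 b (Nat.le_zero.mp hb)) hbinf
    | succ N ih =>
      intro b hb hbinf
      obtain ⟨p, hp⟩ := h7 b hbinf
      obtain ⟨hinj, hwt, heps, he, hf⟩ := h5 p
      have hb' : Ht (Ψ p b).1 ≤ N := by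
        have := hdec b p; omega
      by_cases hb'inf : (Ψ p b).1 = binf
      · refine ⟨p, ?_⟩
        have hεp := heps b p
        rw [if_pos rfl, hb'inf] at hεp
        have hw : ∑ r, acartan l p r * C.wt binf r = 0 := by
          apply Finset.sum_eq_zero; intro r _; rw [hwt0 r]; ring
        rw [hw, h3 p] at hεp
        have hle := le_max_right (0 : ℤ) (-(Ψ p b).2 - 0)
        rw [← hεp] at hle
        omega
      · obtain ⟨q, hq⟩ := ih (Ψ p b).1 hb' hb'inf
        refine ⟨q, ?_⟩
        have hεq := heps b q
        by_cases hqp : q = p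
        · subst hqp
          rw [if_pos rfl] at hεq
          have hle := le_max_left (C.eps q (Ψ q b).1)
            (-(Ψ q b).2 - ∑ r, acartan l q r * C.wt (Ψ q b).1 r)
          rw [← hεq] at hle
          omega
        · rw [if_neg hqp] at hεq
          omega
  -- Main induction
  have main : ∀ N b, Ht b ≤ N →
      ∃ L : List (Fin l), L.foldl (fun ob q => ob.bind (C.f q)) (some binf) = some b := by
    intro N
    induction N with
    | zero =>
      intro b hb
      exact ⟨[], by simp [hH0 b (Nat.le_zero.mp hb)]⟩
    | succ N ih =>
      intro b hb
      by_cases hbinf : b = binf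
      · exact ⟨[], by simp [hbinf]⟩
      obtain ⟨q, hq⟩ := hY (N + 1) b hb hbinf
      obtain ⟨c, hc⟩ := hR (N + 1) b hb q hq
      have hwt_c := C.wt_e q b c hc
      have hHc : Ht c ≤ N := by
        have hsum : ∑ r, -C.wt c r = ∑ r, (-C.wt b r - (if r = q then 1 else 0)) := by
          apply Finset.sum_congr rfl
          intro r _
          have h := hwt_c r
          by_cases hrq : r = q <;> simp [hrq] at h ⊢ <;> omega
        have hcast1 := hHcast b
        have hcast2 := hHcast c
        rw [hsum, Finset.sum_sub_distrib] at hcast2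
        simp only [Finset.sum_ite_eq', Finset.mem_univ, if_pos] at hcast2
        have hb1 : Ht b ≠ 0 := fun h0 => hbinf (hH0 b h0)
        omega
      obtain ⟨L, hL⟩ := ih c hHc
      refine ⟨L ++ [q], ?_⟩
      rw [List.foldl_append, hL]
      simp [(C.e_f q b c).mp hc]
  intro b
  exact main (Ht b) b le_rfl
end
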